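/- arXiv:1806.08608 — 6 statements merged into one kernel-verified Lean document; each statement's English description precedes it below -/
import Mathlib

section
/- If (U_n) is a sequence of random variables with a common expectation μ, Var(U_n) ≤ C for all n, and |Cov(U_j, U_k)| ≤ g(|k−j|) where g(i) → 0 as i → ∞, then (1/n) ∑_{k=1}^n U_k → μ in probability. -/
open MeasureTheory Filter

/-- Law of large numbers under vanishing covariances: convergence in probability. -/
theorem stmt_0 {Ω : Type*} [MeasurableSpace Ω] (P : Measure Ω) [IsProbabilityMeasure P]
    (U : ℕ → Ω → ℝ) (m C : ℝ) (g : ℕ → ℝ)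
    (hmeas : ∀ n, Measurable (U n))
    (hL2 : ∀ n, MemLp (U n) 2 P)
    (hmean : ∀ n, ∫ ω, U n ω ∂P = m)
    (hvar : ∀ n, ∫ ω, (U n ω - m) ^ 2 ∂P ≤ C)
    (hcov : ∀ j k : ℕ, j ≠ k →
      |∫ ω, (U j ω - m) * (U k ω - m) ∂P| ≤ g ((k : ℤ) - (j : ℤ)).natAbs)
    (hg : Tendsto g atTop (nhds 0)) :
    ∀ ε : ℝ, 0 < ε →
      Tendsto (fun n : ℕ =>
          P {ω | ε < |(∑ k ∈ Finset.Icc 1 n, U k ω) / (n : ℝ) - m|})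
        atTop (nhds 0) := by
  intro ε hε
  -- centered variables
  have hV2 : ∀ k : ℕ, MemLp (fun ω => U k ω - m) 2 P := fun k => (hL2 k).sub (memLp_const m)
  have hVmul : ∀ j k : ℕ, Integrable (fun ω => (U j ω - m) * (U k ω - m)) P := by
    intro j k
    have h : MemLp ((fun ω => U j ω - m) • (fun ω => U k ω - m)) 1 P :=
      (hV2 k).smul (hV2 j)
    exact memLp_one_iff_integrable.mp h
  -- g is nonnegative on positive arguments
  have hgpos : ∀ d : ℕ, 0 < d → 0 ≤ g d := by
    intro d hd
    have h := hcov 0 d (by omega)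
    simpa using (abs_nonneg _).trans h
  -- Cesàro average
  have hg' : Tendsto (fun d => g (d + 1)) atTop (nhds 0) := hg.comp (tendsto_add_atTop_nat 1)
  have hA : Tendsto (fun n : ℕ => (n : ℝ)⁻¹ * ∑ d ∈ Finset.range n, g (d + 1)) atTop (nhds 0) :=
    hg'.cesaro
  -- key counting lemma
  have key : ∀ (n : ℕ) (s : Finset ℕ) (h : ℕ → ℕ),
      (∀ k ∈ s, ∀ l ∈ s, h k = h l → k = l) →
      (∀ k ∈ s, 1 ≤ h k ∧ h k ≤ n) →
      ∑ k ∈ s, g (h k) ≤ ∑ d ∈ Finset.range n, g (d + 1) := by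
    intro n s h hinj hrange
    rw [← (Finset.sum_image hinj : ∑ d ∈ s.image h, g d = ∑ k ∈ s, g (h k))]
    have h2 : s.image h ⊆ Finset.Icc 1 n := by
      intro d hd
      simp only [Finset.mem_image] at hd
      obtain ⟨k, hk, rfl⟩ := hd
      exact Finset.mem_Icc.mpr (hrange k hk)
    have h3 : ∑ d ∈ s.image h, g d ≤ ∑ d ∈ Finset.Icc 1 n, g d := by
      refine Finset.sum_le_sum_of_subset_of_nonneg h2 (fun d hd _ => hgpos d ?_)
      have := (Finset.mem_Icc.mp hd).1; omega
    refine h3.trans_eq ?_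
    rw [← Finset.Ico_add_one_right_eq_Icc, Finset.sum_Ico_eq_sum_range]
    refine Finset.sum_congr (by congr 1) (fun i _ => by rw [add_comm])
  -- expansion of the second moment of the sum
  have hexp : ∀ n : ℕ,
      ∫ ω, (∑ k ∈ Finset.Icc 1 n, (U k ω - m)) ^ 2 ∂P
        = ∑ j ∈ Finset.Icc 1 n, ∑ k ∈ Finset.Icc 1 n,
            ∫ ω, (U j ω - m) * (U k ω - m) ∂P := by
    intro n
    have hpt : ∀ ω, (∑ k ∈ Finset.Icc 1 n, (U k ω - m)) ^ 2
        = ∑ j ∈ Finset.Icc 1 n, ∑ k ∈ Finset.Icc 1 n, (U j ω - m) * (U k ω - m) := by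
      intro ω; rw [sq, Finset.sum_mul_sum]
    simp_rw [hpt]
    rw [integral_finset_sum _ (fun j _ => integrable_finset_sum _ (fun k _ => hVmul j k))]
    exact Finset.sum_congr rfl fun j _ => integral_finset_sum _ fun k _ => hVmul j k
  -- bound on the double sum
  have hbound : ∀ n : ℕ,
      ∫ ω, (∑ k ∈ Finset.Icc 1 n, (U k ω - m)) ^ 2 ∂P
        ≤ n * (C + 2 * ∑ d ∈ Finset.range n, g (d + 1)) := by
    intro n
    rw [hexp n]
    have hinner : ∀ j ∈ Finset.Icc 1 n,
        ∑ k ∈ Finset.Icc 1 n, ∫ ω, (U j ω - m) * (U k ω - m) ∂P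
          ≤ C + 2 * ∑ d ∈ Finset.range n, g (d + 1) := by
      intro j hj
      rw [Finset.mem_Icc] at hj
      have hsplit : ∑ k ∈ Finset.Icc 1 n, ∫ ω, (U j ω - m) * (U k ω - m) ∂P
          = (∑ k ∈ Finset.Ico 1 j, ∫ ω, (U j ω - m) * (U k ω - m) ∂P)
            + ((∫ ω, (U j ω - m) * (U j ω - m) ∂P)
              + ∑ k ∈ Finset.Ico (j + 1) (n + 1), ∫ ω, (U j ω - m) * (U k ω - m) ∂P) := by
        have e1 := Finset.sum_eq_sum_Ico_succ_bot (by omega : j < n + 1)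
          (fun k => ∫ ω, (U j ω - m) * (U k ω - m) ∂P)
        have e2 := Finset.sum_Ico_consecutive (fun k => ∫ ω, (U j ω - m) * (U k ω - m) ∂P)
          (by omega : 1 ≤ j) (by omega : j ≤ n + 1)
        rw [← Finset.Ico_add_one_right_eq_Icc, ← e2, e1]
      rw [hsplit]
      have hdiag : ∫ ω, (U j ω - m) * (U j ω - m) ∂P ≤ C := by
        have := hvar j
        simpa [sq] using this
      have hleft : ∑ k ∈ Finset.Ico 1 j, ∫ ω, (U j ω - m) * (U k ω - m) ∂P
          ≤ ∑ d ∈ Finset.range n, g (d + 1) := by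
        have h1 : ∑ k ∈ Finset.Ico 1 j, ∫ ω, (U j ω - m) * (U k ω - m) ∂P
            ≤ ∑ k ∈ Finset.Ico 1 j, g (j - k) := by
          refine Finset.sum_le_sum fun k hk => ?_
          rw [Finset.mem_Ico] at hk
          have h2 := hcov j k (by omega)
          have h3 : ((k : ℤ) - (j : ℤ)).natAbs = j - k := by omega
          rw [h3] at h2
          exact (le_abs_self _).trans h2
        refine h1.trans (key n _ (fun k => j - k) ?_ ?_)
        · intro k hk l hl hkl
          rw [Finset.mem_Ico] at hk hl
          have hkl' : _ = _ := hkl; omega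
        · intro k hk; rw [Finset.mem_Ico] at hk
          show 1 ≤ j - k ∧ j - k ≤ n; omega
      have hright : ∑ k ∈ Finset.Ico (j + 1) (n + 1), ∫ ω, (U j ω - m) * (U k ω - m) ∂P
          ≤ ∑ d ∈ Finset.range n, g (d + 1) := by
        have h1 : ∑ k ∈ Finset.Ico (j + 1) (n + 1), ∫ ω, (U j ω - m) * (U k ω - m) ∂P
            ≤ ∑ k ∈ Finset.Ico (j + 1) (n + 1), g (k - j) := by
          refine Finset.sum_le_sum fun k hk => ?_
          rw [Finset.mem_Ico] at hk
          have h2 := hcov j k (by omega)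
          have h3 : ((k : ℤ) - (j : ℤ)).natAbs = k - j := by omega
          rw [h3] at h2
          exact (le_abs_self _).trans h2
        refine h1.trans (key n _ (fun k => k - j) ?_ ?_)
        · intro k hk l hl hkl
          rw [Finset.mem_Ico] at hk hl
          have hkl' : _ = _ := hkl; omega
        · intro k hk; rw [Finset.mem_Ico] at hk
          show 1 ≤ k - j ∧ k - j ≤ n; omega
      linarith
    calc ∑ j ∈ Finset.Icc 1 n, ∑ k ∈ Finset.Icc 1 n, ∫ ω, (U j ω - m) * (U k ω - m) ∂P
        ≤ ∑ _j ∈ Finset.Icc 1 n, (C + 2 * ∑ d ∈ Finset.range n, g (d + 1)) :=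
          Finset.sum_le_sum hinner
      _ = n * (C + 2 * ∑ d ∈ Finset.range n, g (d + 1)) := by
          rw [Finset.sum_const, Nat.card_Icc, Nat.add_sub_cancel, nsmul_eq_mul]
  -- Chebyshev bound for each n ≥ 1
  have hcheb : ∀ n : ℕ, 1 ≤ n →
      P {ω | ε < |(∑ k ∈ Finset.Icc 1 n, U k ω) / (n : ℝ) - m|}
        ≤ ENNReal.ofReal ((C / n + 2 * ((n : ℝ)⁻¹ * ∑ d ∈ Finset.range n, g (d + 1))) / ε ^ 2) := by
    intro n hn
    have hn0 : (n : ℝ) ≠ 0 := Nat.cast_ne_zero.mpr (by omega)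
    have hnpos : (0 : ℝ) < n := by positivity
    -- rewrite the set
    have hset : {ω | ε < |(∑ k ∈ Finset.Icc 1 n, U k ω) / (n : ℝ) - m|}
        = {ω | ε < |(∑ k ∈ Finset.Icc 1 n, (U k ω - m)) / (n : ℝ)|} := by
      ext ω
      have : (∑ k ∈ Finset.Icc 1 n, U k ω) / (n : ℝ) - m
          = (∑ k ∈ Finset.Icc 1 n, (U k ω - m)) / (n : ℝ) := by
        rw [Finset.sum_sub_distrib, Finset.sum_const, Nat.card_Icc, Nat.add_sub_cancel, nsmul_eq_mul]
        field_simp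
      simp [this]
    rw [hset]
    -- Markov
    set S : Ω → ℝ := fun ω => ∑ k ∈ Finset.Icc 1 n, (U k ω - m) with hSdef
    have hSmem : MemLp S 2 P := memLp_finset_sum _ (fun k _ => hV2 k)
    have hS2int : Integrable (fun ω => (S ω) ^ 2) P := by
      have h : MemLp (S • S) 1 P := hSmem.smul hSmem
      have := memLp_one_iff_integrable.mp h
      simpa [sq, Pi.smul_apply, smul_eq_mul, Pi.mul_def] using this
    have hfint : Integrable (fun ω => (S ω / n) ^ 2) P := by
      simp_rw [div_pow]
      exact hS2int.div_const _
    have hmarkov := mul_meas_ge_le_integral_of_nonneg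
      (Eventually.of_forall fun ω => sq_nonneg (S ω / n)) hfint (ε ^ 2)
    have hsub : {ω | ε < |S ω / (n : ℝ)|} ⊆ {ω | ε ^ 2 ≤ (S ω / n) ^ 2} := by
      intro ω hω
      simp only [Set.mem_setOf_eq] at hω ⊢
      calc ε ^ 2 ≤ |S ω / n| ^ 2 := pow_le_pow_left₀ hε.le hω.le 2
        _ = (S ω / n) ^ 2 := sq_abs _
    have hPB : P {ω | ε ^ 2 ≤ (S ω / n) ^ 2} ≠ ⊤ := measure_ne_top _ _
    have hint_eq : ∫ ω, (S ω / n) ^ 2 ∂P = (∫ ω, (S ω) ^ 2 ∂P) / (n : ℝ) ^ 2 := by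
      simp_rw [div_pow]
      exact integral_div _ _
    have hchain : (P {ω | ε ^ 2 ≤ (S ω / n) ^ 2}).toReal
        ≤ (C / n + 2 * ((n : ℝ)⁻¹ * ∑ d ∈ Finset.range n, g (d + 1))) / ε ^ 2 := by
      have h1 : ε ^ 2 * (P {ω | ε ^ 2 ≤ (S ω / n) ^ 2}).toReal ≤ ∫ ω, (S ω / n) ^ 2 ∂P := hmarkov
      have h2 : ∫ ω, (S ω / n) ^ 2 ∂P
          ≤ (n * (C + 2 * ∑ d ∈ Finset.range n, g (d + 1))) / (n : ℝ) ^ 2 := by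
        rw [hint_eq]
        have := hbound n
        gcongr
      have h3 : (n * (C + 2 * ∑ d ∈ Finset.range n, g (d + 1))) / (n : ℝ) ^ 2
          = C / n + 2 * ((n : ℝ)⁻¹ * ∑ d ∈ Finset.range n, g (d + 1)) := by
        field_simp
      rw [h3] at h2
      have hε2 : (0 : ℝ) < ε ^ 2 := by positivity
      rw [le_div_iff₀ hε2]
      nlinarith [h1.trans h2]
    calc P {ω | ε < |S ω / (n : ℝ)|} ≤ P {ω | ε ^ 2 ≤ (S ω / n) ^ 2} := measure_mono hsub
      _ = ENNReal.ofReal ((P {ω | ε ^ 2 ≤ (S ω / n) ^ 2}).toReal) :=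
          (ENNReal.ofReal_toReal hPB).symm
      _ ≤ ENNReal.ofReal ((C / n + 2 * ((n : ℝ)⁻¹ * ∑ d ∈ Finset.range n, g (d + 1))) / ε ^ 2) :=
          ENNReal.ofReal_le_ofReal hchain
  -- take the limit
  have hb : Tendsto (fun n : ℕ =>
      (C / n + 2 * ((n : ℝ)⁻¹ * ∑ d ∈ Finset.range n, g (d + 1))) / ε ^ 2) atTop (nhds 0) := by
    have h1 := (tendsto_const_div_atTop_nhds_zero_nat C).add (hA.const_mul 2)
    have h2 := h1.div_const (ε ^ 2)
    simpa using h2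
  have hupper : Tendsto (fun n : ℕ => ENNReal.ofReal
      ((C / n + 2 * ((n : ℝ)⁻¹ * ∑ d ∈ Finset.range n, g (d + 1))) / ε ^ 2)) atTop (nhds 0) := by
    have := ENNReal.tendsto_ofReal hb
    simpa using this
  refine tendsto_of_tendsto_of_tendsto_of_le_of_le' tendsto_const_nhds hupper ?_ ?_
  · exact Eventually.of_forall fun n => zero_le
  · filter_upwards [eventually_ge_atTop 1] with n hn
    exact hcheb n hn
end

section
/- Consider the generalized ARCH model X_t = σ_t ε_t, σ_t² = α_0 + α_1 X_{t−1}² + l_1 L_{t−1}, where α_0 ≥ 0, α_1, l_1 > 0, α_1 < 1, (ε_t) is i.i.d. with mean 0 and E[ε_0²] = 1, and (L_t) is a strictly stationary positive process with E[L_0] = 1, E[L_0²] < ∞, independent of (ε_t). Then σ_{t+1}² = ∑_{i=0}^∞ (∏_{j=0}^{i−1} α_1 ε_{t−j}²)(α_0 + l_1 L_{t−i}) converges almost surely and defines a strictly stationary solution of the recursion σ_{t+1}² = α_1 ε_t² σ_t² + α_0 + l_1 L_t. -/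
open MeasureTheory Filter ProbabilityTheory
open scoped ENNReal NNReal


lemma summable_of_tsum_ofReal_ne_top {a : ℕ → ℝ} (h : ∀ i, 0 ≤ a i)
    (h2 : ∑' i, ENNReal.ofReal (a i) ≠ ⊤) : Summable a := by
  have hsum : Summable (fun i => (a i).toNNReal) :=
    ENNReal.tsum_coe_ne_top_iff_summable.mp (by simpa [ENNReal.ofReal] using h2)
  exact (NNReal.summable_coe.mpr hsum).congr (fun i => Real.coe_toNNReal _ (h i))

lemma tsum_eq_toReal_ofReal {a : ℕ → ℝ} (h : ∀ i, 0 ≤ a i) :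
    ∑' i, a i = (∑' i, ENNReal.ofReal (a i)).toReal := by
  by_cases hs : Summable a
  · rw [← ENNReal.ofReal_tsum_of_nonneg h hs, ENNReal.toReal_ofReal (tsum_nonneg h)]
  · rw [tsum_eq_zero_of_not_summable hs]
    have : ∑' i, ENNReal.ofReal (a i) = ⊤ := by
      by_contra htop
      exact hs (summable_of_tsum_ofReal_ne_top h htop)
    simp [this]

lemma lintegral_finset_prod {Ω : Type*} [MeasurableSpace Ω] {P : Measure Ω}
    [IsProbabilityMeasure P] {f : ℤ → Ω → ℝ≥0∞}
    (hindep : iIndepFun (m := fun _ : ℤ => (inferInstance : MeasurableSpace ℝ≥0∞)) f P)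
    (hmeas : ∀ i, Measurable (f i)) (s : Finset ℤ) :
    ∫⁻ ω, ∏ j ∈ s, f j ω ∂P = ∏ j ∈ s, ∫⁻ ω, f j ω ∂P := by
  classical
  induction s using Finset.induction_on with
  | empty => simp
  | @insert i s hx ih =>
    have hFi : IndepFun (∏ j ∈ s, f j) (f i) P :=
      hindep.indepFun_finset_prod_of_notMem hmeas hx
    have hFmeas : Measurable (∏ j ∈ s, f j) := by
      have : (∏ j ∈ s, f j) = fun ω => ∏ j ∈ s, f j ω := by
        funext ω; simp
      rw [this]
      exact Finset.measurable_prod s (fun j _ => hmeas j)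
    have key := lintegral_mul_eq_lintegral_mul_lintegral_of_indepFun hFmeas (hmeas i) hFi
    have h1 : ∫⁻ ω, ∏ j ∈ Insert.insert i s, f j ω ∂P
        = ∫⁻ ω, ((∏ j ∈ s, f j) * f i) ω ∂P := by
      refine lintegral_congr fun ω => ?_
      simp [Finset.prod_insert hx, mul_comm]
    have h2 : ∫⁻ ω, (∏ j ∈ s, f j) ω ∂P = ∫⁻ ω, ∏ j ∈ s, f j ω ∂P :=
      lintegral_congr fun ω => by simp
    rw [h1, key, h2, ih, Finset.prod_insert hx, mul_comm]



lemma map_restrict_eq_pi {Ω : Type*} [MeasurableSpace Ω] (P : Measure Ω)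
    [IsProbabilityMeasure P] (ε : ℤ → Ω → ℝ) (hεmeas : ∀ t, Measurable (ε t))
    (hεindep : iIndepFun (m := fun _ : ℤ => (inferInstance : MeasurableSpace ℝ)) ε P)
    (hεident : ∀ t : ℤ, Measure.map (ε t) P = Measure.map (ε 0) P)
    (I : Finset ℤ) (k : ℤ) :
    Measure.map (fun ω => fun i : I => ε (↑i + k) ω) P
      = Measure.pi (fun _ : I => Measure.map (ε 0) P) := by
  classical
  refine (Measure.pi_eq ?_).symm
  intro s hs
  have hmeasfam : Measurable (fun ω => fun i : I => ε (↑i + k) ω) :=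
    measurable_pi_lambda _ fun i => hεmeas _
  rw [Measure.map_apply hmeasfam (MeasurableSet.univ_pi hs)]
  set sets : ℤ → Set ℝ := fun j => if h : j - k ∈ I then s ⟨j - k, h⟩ else Set.univ with hsets
  have hsets_eq : ∀ (t : ℤ) (ht : t ∈ I), sets (t + k) = s ⟨t, ht⟩ := by
    intro t ht
    have h1 : t + k - k = t := by ring
    rw [hsets]
    dsimp only
    rw [dif_pos (show t + k - k ∈ I by rw [h1]; exact ht)]
    exact congrArg s (Subtype.ext h1)
  have hpre : (fun ω => fun i : I => ε (↑i + k) ω) ⁻¹' Set.pi Set.univ s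
      = ⋂ j ∈ I.image (fun t => t + k), ε j ⁻¹' sets j := by
    ext ω
    simp only [Set.mem_preimage, Set.mem_pi, Set.mem_univ, forall_true_left, Set.mem_iInter,
      Finset.mem_image]
    constructor
    · rintro h j ⟨t, ht, rfl⟩
      rw [hsets_eq t ht]
      exact h ⟨t, ht⟩
    · intro h i
      have := h (↑i + k) ⟨↑i, i.2, rfl⟩
      rw [hsets_eq ↑i i.2] at this
      simpa using this
  have hH : ∀ j, j ∈ I.image (fun t => t + k) → MeasurableSet (sets j) := by
    intro j hj
    rw [hsets]
    dsimp only
    split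
    · exact hs _
    · exact MeasurableSet.univ
  rw [hpre, hεindep.measure_inter_preimage_eq_mul (I.image fun t => t + k) hH,
    Finset.prod_image (by intro x hx y hy h; exact add_right_cancel h)]
  rw [← Finset.prod_attach I (fun t => P (ε (t + k) ⁻¹' sets (t + k)))]
  rw [Finset.univ_eq_attach]
  refine Finset.prod_congr rfl fun i _ => ?_
  rw [hsets_eq ↑i i.2, Subtype.coe_eta, ← hεident (↑i + k),
    Measure.map_apply (hεmeas _) (hs i)]



lemma map_shift_eq {Ω : Type*} [MeasurableSpace Ω] (P : Measure Ω)
    [IsProbabilityMeasure P] (ε : ℤ → Ω → ℝ) (hεmeas : ∀ t, Measurable (ε t))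
    (hεindep : iIndepFun (m := fun _ : ℤ => (inferInstance : MeasurableSpace ℝ)) ε P)
    (hεident : ∀ t : ℤ, Measure.map (ε t) P = Measure.map (ε 0) P) (k : ℤ) :
    Measure.map (fun ω => fun t : ℤ => ε (t + k) ω) P
      = Measure.map (fun ω => fun t : ℤ => ε t ω) P := by
  have hm : ∀ k : ℤ, Measurable (fun ω => fun t : ℤ => ε (t + k) ω) :=
    fun k => measurable_pi_lambda _ (fun t => hεmeas _)
  have hm0 : Measurable (fun ω => fun t : ℤ => ε t ω) :=
    measurable_pi_lambda _ (fun t => hεmeas _)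
  have hcyl : ∀ (k : ℤ) (I : Finset ℤ) (S : Set (∀ i : I, ℝ)), MeasurableSet S →
      Measure.map (fun ω => fun t : ℤ => ε (t + k) ω) P (cylinder I S)
        = Measure.pi (fun _ : I => Measure.map (ε 0) P) S := by
    intro k I S hS
    rw [Measure.map_apply (hm k) (hS.cylinder)]
    have : (fun ω => fun t : ℤ => ε (t + k) ω) ⁻¹' cylinder I S
        = (fun ω => fun i : I => ε (↑i + k) ω) ⁻¹' S := rfl
    rw [this, ← Measure.map_apply (measurable_pi_lambda _ fun i => hεmeas _) hS,
      map_restrict_eq_pi P ε hεmeas hεindep hεident I k]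
  refine MeasureTheory.ext_of_generate_finite _ generateFrom_measurableCylinders.symm
    isPiSystem_measurableCylinders ?_ ?_
  · intro u hu
    obtain ⟨I, S, hS, rfl⟩ := (mem_measurableCylinders _).mp hu
    rw [hcyl k I S hS]
    have h0 := hcyl 0 I S hS
    simp only [add_zero] at h0
    exact h0.symm
  · haveI : IsProbabilityMeasure (Measure.map (fun ω => fun t : ℤ => ε (t + k) ω) P) :=
      Measure.isProbabilityMeasure_map (hm k).aemeasurable
    haveI : IsProbabilityMeasure (Measure.map (fun ω => fun t : ℤ => ε t ω) P) :=
      Measure.isProbabilityMeasure_map hm0.aemeasurable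
    simp



/-- Existence of a strictly stationary solution of the generalized ARCH model
`σ_{t+1}² = α₁ ε_t² σ_t² + α₀ + l₁ L_t`, given by the random series
`σ_{t+1}² = ∑_{i=0}^∞ (∏_{j=0}^{i-1} α₁ ε_{t-j}²)(α₀ + l₁ L_{t-i})`. -/
theorem stmt_6 {Ω : Type*} [MeasurableSpace Ω] (P : Measure Ω) [IsProbabilityMeasure P]
    (ε L : ℤ → Ω → ℝ) (α₀ α₁ l₁ : ℝ)
    (hα₀ : 0 ≤ α₀) (hα₁ : 0 < α₁) (hl₁ : 0 < l₁) (hα₁' : α₁ < 1)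
    (hεmeas : ∀ t, Measurable (ε t))
    (hLmeas : ∀ t, Measurable (L t))
    -- (ε_t) is i.i.d. with mean 0 and unit second moment
    (hεindep : iIndepFun (m := fun _ : ℤ => (inferInstance : MeasurableSpace ℝ)) ε P)
    (hεident : ∀ t : ℤ, Measure.map (ε t) P = Measure.map (ε 0) P)
    (hεmean : ∫ ω, ε 0 ω ∂P = 0)
    (hεm2 : ∫ ω, (ε 0 ω) ^ 2 ∂P = 1)
    -- (L_t) is strictly stationary, positive, mean one, square integrable
    (hLpos : ∀ t, ∀ ω, 0 < L t ω)
    (hLstat : ∀ k : ℤ, Measure.map (fun ω => fun t => L (t + k) ω) P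
      = Measure.map (fun ω => fun t => L t ω) P)
    (hLmean : ∫ ω, L 0 ω ∂P = 1)
    (hL2 : MemLp (L 0) 2 P)
    -- (L_t) is independent of (ε_t)
    (hindep : IndepFun (fun ω => fun t : ℤ => ε t ω) (fun ω => fun t : ℤ => L t ω) P)
    -- the candidate solution
    (σsq : ℤ → Ω → ℝ)
    (hσ : ∀ t : ℤ, ∀ ω, σsq t ω =
      ∑' i : ℕ, (∏ j ∈ Finset.range i, α₁ * (ε (t - 1 - j) ω) ^ 2)
        * (α₀ + l₁ * L (t - 1 - i) ω)) :
    -- the series converges a.s.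
    (∀ t : ℤ, ∀ᵐ ω ∂P, Summable (fun i : ℕ =>
      (∏ j ∈ Finset.range i, α₁ * (ε (t - 1 - j) ω) ^ 2) * (α₀ + l₁ * L (t - 1 - i) ω))) ∧
    -- it satisfies the recursion a.s.
    (∀ᵐ ω ∂P, ∀ t : ℤ, σsq (t + 1) ω = α₁ * (ε t ω) ^ 2 * σsq t ω + α₀ + l₁ * L t ω) ∧
    -- and it is strictly stationary
    (∀ k : ℤ, Measure.map (fun ω => fun t : ℤ => σsq (t + k) ω) P
      = Measure.map (fun ω => fun t : ℤ => σsq t ω) P) := by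
  classical
  have hεtraj : Measurable (fun ω => fun t : ℤ => ε t ω) :=
    measurable_pi_lambda _ fun t => hεmeas t
  have hLtraj : Measurable (fun ω => fun t : ℤ => L t ω) :=
    measurable_pi_lambda _ fun t => hLmeas t
  have htrm_nonneg : ∀ (t : ℤ) (i : ℕ) (ω : Ω),
      0 ≤ (∏ j ∈ Finset.range i, α₁ * (ε (t - 1 - j) ω) ^ 2) * (α₀ + l₁ * L (t - 1 - i) ω) :=
    fun t i ω => mul_nonneg (Finset.prod_nonneg fun j _ => mul_nonneg hα₁.le (sq_nonneg _))
      (add_nonneg hα₀ (mul_nonneg hl₁.le (hLpos _ ω).le))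
  -- second moment of ε as a lower integral
  have hε2int : Integrable (fun ω => (ε 0 ω) ^ 2) P := by
    by_contra h
    rw [integral_undef h] at hεm2
    exact one_ne_zero hεm2.symm
  have hEε : ∀ s : ℤ, ∫⁻ ω, ENNReal.ofReal ((ε s ω) ^ 2) ∂P = 1 := by
    intro s
    have hf : Measurable fun x : ℝ => ENNReal.ofReal (x ^ 2) :=
      (measurable_id.pow_const 2).ennreal_ofReal
    rw [← lintegral_map hf (hεmeas s), hεident s, lintegral_map hf (hεmeas 0),
      ← ofReal_integral_eq_lintegral_ofReal hε2int (ae_of_all _ fun ω => sq_nonneg _), hεm2,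
      ENNReal.ofReal_one]
  -- mean of L as a lower integral
  have hLmap : ∀ s : ℤ, Measure.map (L s) P = Measure.map (L 0) P := by
    intro s
    have e0 : Measurable (fun f : ℤ → ℝ => f 0) := measurable_pi_apply 0
    have h1 := congrArg (Measure.map (fun f : ℤ → ℝ => f 0)) (hLstat s)
    rw [Measure.map_map e0 (measurable_pi_lambda _ fun t => hLmeas _),
      Measure.map_map e0 hLtraj] at h1
    simp only [Function.comp_def, zero_add] at h1
    exact h1
  have hLint : Integrable (L 0) P := hL2.integrable one_le_two
  have hEL : ∀ s : ℤ, ∫⁻ ω, ENNReal.ofReal (L s ω) ∂P = 1 := by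
    intro s
    rw [← lintegral_map ENNReal.measurable_ofReal (hLmeas s), hLmap s,
      lintegral_map ENNReal.measurable_ofReal (hLmeas 0),
      ← ofReal_integral_eq_lintegral_ofReal hLint (ae_of_all _ fun ω => (hLpos 0 ω).le), hLmean,
      ENNReal.ofReal_one]
  -- the key moment computation
  have hkey : ∀ (t : ℤ) (i : ℕ), ∫⁻ ω, ENNReal.ofReal
      ((∏ j ∈ Finset.range i, α₁ * (ε (t - 1 - j) ω) ^ 2) * (α₀ + l₁ * L (t - 1 - i) ω)) ∂P
      = ENNReal.ofReal α₁ ^ i * (ENNReal.ofReal α₀ + ENNReal.ofReal l₁) := by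
    intro t i
    set F : Ω → ℝ≥0∞ :=
      fun ω => ∏ j ∈ Finset.range i, ENNReal.ofReal (α₁ * (ε (t - 1 - j) ω) ^ 2) with hF
    set G : Ω → ℝ≥0∞ := fun ω => ENNReal.ofReal (α₀ + l₁ * L (t - 1 - i) ω) with hG
    have hsplit : ∀ ω, ENNReal.ofReal
        ((∏ j ∈ Finset.range i, α₁ * (ε (t - 1 - j) ω) ^ 2) * (α₀ + l₁ * L (t - 1 - i) ω))
        = F ω * G ω := by
      intro ω
      rw [ENNReal.ofReal_mul (Finset.prod_nonneg fun j _ => mul_nonneg hα₁.le (sq_nonneg _)),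
        ENNReal.ofReal_prod_of_nonneg (fun j _ => mul_nonneg hα₁.le (sq_nonneg _))]
    have hFmeas : Measurable F :=
      Finset.measurable_prod _ fun j _ =>
        ((hεmeas _).pow_const 2 |>.const_mul α₁).ennreal_ofReal
    have hGmeas : Measurable G := ((hLmeas _).const_mul l₁ |>.const_add α₀).ennreal_ofReal
    have hFG : IndepFun F G P := by
      have h := hindep.comp
        (φ := fun e : ℤ → ℝ => ∏ j ∈ Finset.range i, ENNReal.ofReal (α₁ * (e (t - 1 - j)) ^ 2))
        (ψ := fun l : ℤ → ℝ => ENNReal.ofReal (α₀ + l₁ * l (t - 1 - i)))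
        (Finset.measurable_prod _ fun j _ =>
          (((measurable_pi_apply (t - 1 - (j : ℤ)) : Measurable fun e : ℤ → ℝ => e (t - 1 - (j : ℤ)))).pow_const 2 |>.const_mul α₁).ennreal_ofReal)
        ((((measurable_pi_apply (t - 1 - (i : ℤ)) : Measurable fun l : ℤ → ℝ => l (t - 1 - (i : ℤ)))).const_mul l₁ |>.const_add α₀).ennreal_ofReal)
      exact h
    rw [lintegral_congr hsplit,
      lintegral_mul_eq_lintegral_mul_lintegral_of_indepFun'' hFmeas.aemeasurable
        hGmeas.aemeasurable hFG]
    have hf : iIndepFun (m := fun _ : ℤ => (inferInstance : MeasurableSpace ℝ≥0∞))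
        (fun j ω => ENNReal.ofReal (α₁ * (ε j ω) ^ 2)) P :=
      hεindep.comp (fun j x => ENNReal.ofReal (α₁ * x ^ 2))
        (fun j => ((measurable_id.pow_const 2).const_mul α₁).ennreal_ofReal)
    have hinj : ∀ x ∈ Finset.range i, ∀ y ∈ Finset.range i,
        t - 1 - (x : ℤ) = t - 1 - (y : ℤ) → x = y := by intro x _ y _ h; omega
    have hFint : ∫⁻ ω, F ω ∂P = ENNReal.ofReal α₁ ^ i := by
      have h1 : ∀ ω, F ω = ∏ m ∈ (Finset.range i).image (fun j : ℕ => t - 1 - (j : ℤ)),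
          ENNReal.ofReal (α₁ * (ε m ω) ^ 2) := by
        intro ω; rw [Finset.prod_image hinj]
      rw [lintegral_congr h1,
        lintegral_finset_prod hf
          (fun j => ((hεmeas j).pow_const 2 |>.const_mul α₁).ennreal_ofReal) _,
        Finset.prod_image hinj]
      have h2 : ∀ j : ℕ, ∫⁻ ω, ENNReal.ofReal (α₁ * (ε (t - 1 - (j : ℤ)) ω) ^ 2) ∂P
          = ENNReal.ofReal α₁ := by
        intro j
        simp_rw [ENNReal.ofReal_mul hα₁.le]
        rw [lintegral_const_mul _ ((hεmeas _).pow_const 2).ennreal_ofReal, hEε, mul_one]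
      rw [Finset.prod_congr rfl fun j _ => h2 j, Finset.prod_const, Finset.card_range]
    have hGint : ∫⁻ ω, G ω ∂P = ENNReal.ofReal α₀ + ENNReal.ofReal l₁ := by
      have h1 : ∀ ω, G ω
          = ENNReal.ofReal α₀ + ENNReal.ofReal l₁ * ENNReal.ofReal (L (t - 1 - i) ω) := by
        intro ω
        rw [hG]
        dsimp only
        rw [ENNReal.ofReal_add hα₀ (mul_nonneg hl₁.le (hLpos _ ω).le), ENNReal.ofReal_mul hl₁.le]
      rw [lintegral_congr h1, lintegral_add_left measurable_const,
        lintegral_const_mul _ (hLmeas _).ennreal_ofReal, hEL, mul_one, lintegral_const,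
        measure_univ, mul_one]
    rw [hFint, hGint]
  -- Part 1 : a.s. summability
  have hsum : ∀ t : ℤ, ∀ᵐ ω ∂P, Summable (fun i : ℕ =>
      (∏ j ∈ Finset.range i, α₁ * (ε (t - 1 - j) ω) ^ 2) * (α₀ + l₁ * L (t - 1 - i) ω)) := by
    intro t
    have hmeasi : ∀ i : ℕ, Measurable (fun ω => ENNReal.ofReal
        ((∏ j ∈ Finset.range i, α₁ * (ε (t - 1 - j) ω) ^ 2)
          * (α₀ + l₁ * L (t - 1 - i) ω))) :=
      fun i => ((Finset.measurable_prod _ fun j _ => (hεmeas _).pow_const 2 |>.const_mul α₁).mul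
        ((hLmeas _).const_mul l₁ |>.const_add α₀)).ennreal_ofReal
    have hne : ∫⁻ ω, ∑' i : ℕ, ENNReal.ofReal
        ((∏ j ∈ Finset.range i, α₁ * (ε (t - 1 - j) ω) ^ 2)
          * (α₀ + l₁ * L (t - 1 - i) ω)) ∂P ≠ ⊤ := by
      rw [lintegral_tsum fun i => (hmeasi i).aemeasurable]
      simp_rw [hkey t]
      rw [ENNReal.tsum_mul_right, ENNReal.tsum_geometric]
      have hlt : ENNReal.ofReal α₁ < 1 := by
        rw [← ENNReal.ofReal_one]
        exact (ENNReal.ofReal_lt_ofReal_iff one_pos).mpr hα₁'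
      exact ENNReal.mul_ne_top (ENNReal.inv_ne_top.mpr (tsub_pos_of_lt hlt).ne')
        (ENNReal.add_ne_top.mpr ⟨ENNReal.ofReal_ne_top, ENNReal.ofReal_ne_top⟩)
    filter_upwards [ae_lt_top (Measurable.ennreal_tsum hmeasi) hne] with ω hω
    exact summable_of_tsum_ofReal_ne_top (fun i => htrm_nonneg t i ω) hω.ne
  refine ⟨hsum, ?_, ?_⟩
  · -- Part 2 : recursion
    rw [ae_all_iff]
    intro t
    filter_upwards [hsum (t + 1)] with ω hω
    have hA : (∑' i : ℕ, (∏ j ∈ Finset.range i, α₁ * (ε (t + 1 - 1 - j) ω) ^ 2)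
        * (α₀ + l₁ * L (t + 1 - 1 - i) ω))
        = (α₀ + l₁ * L t ω) + α₁ * (ε t ω) ^ 2 * σsq t ω := by
      calc ∑' i : ℕ, (∏ j ∈ Finset.range i, α₁ * (ε (t + 1 - 1 - j) ω) ^ 2)
            * (α₀ + l₁ * L (t + 1 - 1 - i) ω)
          = ((∏ j ∈ Finset.range 0, α₁ * (ε (t + 1 - 1 - j) ω) ^ 2)
              * (α₀ + l₁ * L (t + 1 - 1 - (0 : ℕ)) ω))
            + ∑' i : ℕ, (∏ j ∈ Finset.range (i + 1), α₁ * (ε (t + 1 - 1 - j) ω) ^ 2)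
              * (α₀ + l₁ * L (t + 1 - 1 - ((i + 1 : ℕ) : ℤ)) ω) := Summable.tsum_eq_zero_add hω
        _ = (α₀ + l₁ * L t ω)
            + ∑' i : ℕ, α₁ * (ε t ω) ^ 2
              * ((∏ j ∈ Finset.range i, α₁ * (ε (t - 1 - j) ω) ^ 2)
                * (α₀ + l₁ * L (t - 1 - i) ω)) := by
            congr 1
            · norm_num
            · refine tsum_congr fun i => ?_
              rw [Finset.prod_range_succ']
              have hp : (∏ j ∈ Finset.range i, α₁ * (ε (t + 1 - 1 - ((j : ℕ) + 1 : ℕ)) ω) ^ 2)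
                  = ∏ j ∈ Finset.range i, α₁ * (ε (t - 1 - j) ω) ^ 2 := by
                refine Finset.prod_congr rfl fun j _ => ?_
                have : (t + 1 - 1 - ((j : ℕ) + 1 : ℕ) : ℤ) = t - 1 - j := by push_cast; ring
                rw [this]
              rw [hp]
              have h2 : (t + 1 - 1 - ((i + 1 : ℕ) : ℤ) : ℤ) = t - 1 - i := by push_cast; ring
              have h3 : (t + 1 - 1 - ((0 : ℕ) : ℤ) : ℤ) = t := by push_cast; ring
              rw [h2, h3]
              ring
        _ = (α₀ + l₁ * L t ω) + α₁ * (ε t ω) ^ 2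
            * ∑' i : ℕ, (∏ j ∈ Finset.range i, α₁ * (ε (t - 1 - j) ω) ^ 2)
              * (α₀ + l₁ * L (t - 1 - i) ω) := by rw [tsum_mul_left]
        _ = (α₀ + l₁ * L t ω) + α₁ * (ε t ω) ^ 2 * σsq t ω := by rw [← hσ t ω]
    rw [hσ (t + 1) ω, hA]
    ring
  · -- Part 3 : strict stationarity
    intro k
    set Φ : ((ℤ → ℝ) × (ℤ → ℝ)) → ℤ → ℝ := fun p t =>
      (∑' i : ℕ, ENNReal.ofReal ((∏ j ∈ Finset.range i, α₁ * (p.1 (t - 1 - j)) ^ 2)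
        * (α₀ + l₁ * p.2 (t - 1 - i)))).toReal with hΦdef
    have hΦmeas : Measurable Φ := by
      refine measurable_pi_lambda _ fun t => ENNReal.measurable_toReal.comp ?_
      refine Measurable.ennreal_tsum fun i => Measurable.ennreal_ofReal ?_
      have h1 : Measurable fun p : (ℤ → ℝ) × (ℤ → ℝ) =>
          ∏ j ∈ Finset.range i, α₁ * (p.1 (t - 1 - j)) ^ 2 := by
        apply Finset.measurable_prod
        intro j _
        exact ((Measurable.eval (a := t - 1 - (j:ℤ)) (measurable_fst : Measurable (Prod.fst : (ℤ → ℝ) × (ℤ → ℝ) → ℤ → ℝ))).pow_const 2).const_mul α₁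
      have h2 : Measurable fun p : (ℤ → ℝ) × (ℤ → ℝ) => α₀ + l₁ * p.2 (t - 1 - i) :=
        ((Measurable.eval (a := t - 1 - (i:ℤ)) (measurable_snd : Measurable (Prod.snd : (ℤ → ℝ) × (ℤ → ℝ) → ℤ → ℝ))).const_mul l₁).const_add α₀
      exact h1.mul h2
    have hσshift : ∀ m : ℤ, (fun ω => fun t : ℤ => σsq (t + m) ω)
        = fun ω => Φ ((fun t => ε (t + m) ω), (fun t => L (t + m) ω)) := by
      intro m
      funext ω
      funext t
      rw [hΦdef]
      dsimp only
      rw [hσ (t + m) ω, tsum_eq_toReal_ofReal (fun i => htrm_nonneg (t + m) i ω)]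
      refine congrArg ENNReal.toReal (tsum_congr fun i => ?_)
      refine congrArg ENNReal.ofReal ?_
      refine congrArg₂ (· * ·) ?_ ?_
      · refine Finset.prod_congr rfl fun j _ => ?_
        rw [show t + m - 1 - (j : ℤ) = t - 1 - (j : ℤ) + m by ring]
      · rw [show t + m - 1 - (i : ℤ) = t - 1 - (i : ℤ) + m by ring]
    have hσ0 : (fun ω => fun t : ℤ => σsq t ω)
        = fun ω => Φ ((fun t => ε t ω), (fun t => L t ω)) := by
      funext ω
      funext t
      rw [hΦdef]
      dsimp only
      rw [hσ t ω, tsum_eq_toReal_ofReal (fun i => htrm_nonneg t i ω)]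
    have hεk : Measurable (fun ω => fun t : ℤ => ε (t + k) ω) :=
      measurable_pi_lambda _ fun t => hεmeas _
    have hLk : Measurable (fun ω => fun t : ℤ => L (t + k) ω) :=
      measurable_pi_lambda _ fun t => hLmeas _
    have hpairmk : Measurable (fun ω => ((fun t : ℤ => ε (t + k) ω), (fun t : ℤ => L (t + k) ω))) :=
      hεk.prodMk hLk
    have hpairm0 : Measurable (fun ω => ((fun t : ℤ => ε t ω), (fun t : ℤ => L t ω))) :=
      hεtraj.prodMk hLtraj
    have hindk : IndepFun (fun ω => fun t : ℤ => ε (t + k) ω)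
        (fun ω => fun t : ℤ => L (t + k) ω) P := by
      have hs : Measurable (fun e : ℤ → ℝ => fun t : ℤ => e (t + k)) :=
        measurable_pi_lambda _ fun t => measurable_pi_apply _
      exact hindep.comp hs hs
    have hpair : Measure.map
        (fun ω => ((fun t : ℤ => ε (t + k) ω), (fun t : ℤ => L (t + k) ω))) P
        = Measure.map (fun ω => ((fun t : ℤ => ε t ω), (fun t : ℤ => L t ω))) P := by
      rw [(indepFun_iff_map_prod_eq_prod_map_map hεk.aemeasurable hLk.aemeasurable).mp hindk,
        (indepFun_iff_map_prod_eq_prod_map_map hεtraj.aemeasurable hLtraj.aemeasurable).mp hindep,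
        map_shift_eq P ε hεmeas hεindep hεident k, hLstat k]
    have hc1 : (fun ω => Φ ((fun t : ℤ => ε (t + k) ω), (fun t : ℤ => L (t + k) ω)))
        = Φ ∘ (fun ω => ((fun t : ℤ => ε (t + k) ω), (fun t : ℤ => L (t + k) ω))) := rfl
    have hc0 : (fun ω => Φ ((fun t : ℤ => ε t ω), (fun t : ℤ => L t ω)))
        = Φ ∘ (fun ω => ((fun t : ℤ => ε t ω), (fun t : ℤ => L t ω))) := rfl
    rw [hσshift k, hσ0, hc1, hc0, ← Measure.map_map hΦmeas hpairmk,
      ← Measure.map_map hΦmeas hpairm0, hpair]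
end

section
/- Under the assumptions α_1 < 1 and E[L_0²] < ∞, the generalized ARCH recursion σ_{t+1}² = α_1 ε_t² σ_t² + α_0 + l_1 L_t has a unique solution in the class of processes satisfying sup_{t∈ℤ} E[σ_t²] < ∞, namely σ_{t+1}² = ∑_{i=0}^∞ (∏_{j=0}^{i−1} α_1 ε_{t−j}²)(α_0 + l_1 L_{t−i}). -/
open MeasureTheory Filter ProbabilityTheory

/-- Expected value of the product of innovations. -/
lemma aux_prod_integral {Ω : Type*} [MeasurableSpace Ω] (P : Measure Ω) [IsProbabilityMeasure P]
    (ε : ℤ → Ω → ℝ) (α₁ : ℝ) (hα₁ : 0 < α₁)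
    (hεmeas : ∀ t, Measurable (ε t))
    (hεindep : iIndepFun ε P)
    (hεident : ∀ t : ℤ, Measure.map (ε t) P = Measure.map (ε 0) P)
    (hεm2 : ∫ ω, (ε 0 ω) ^ 2 ∂P = 1) :
    ∀ (s : ℤ) (k : ℕ), ∫ ω, (∏ i ∈ Finset.range (k+1), (α₁ * (ε (s - i) ω) ^ 2)) ∂P
      = α₁ ^ (k+1) := by
  set Y : ℤ → Ω → ℝ := fun s ω => α₁ * (ε s ω) ^ 2 with hYdef
  have hYmeas : ∀ s, Measurable (Y s) := fun s => (measurable_const.mul ((hεmeas s).pow_const 2))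
  have hYindep : iIndepFun Y P :=
    hεindep.comp (fun _ x => α₁ * x ^ 2) (fun _ => measurable_const.mul (measurable_id.pow_const 2))
  have hε2 : ∀ s : ℤ, ∫ ω, (ε s ω) ^ 2 ∂P = 1 := by
    intro s
    have h1 : ∫ ω, (ε s ω) ^ 2 ∂P = ∫ x, x ^ 2 ∂(Measure.map (ε s) P) :=
      (integral_map (hεmeas s).aemeasurable
        (measurable_id.pow_const 2).aestronglyMeasurable).symm
    have h2 : ∫ x, x ^ 2 ∂(Measure.map (ε 0) P) = ∫ ω, (ε 0 ω) ^ 2 ∂P :=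
      integral_map (hεmeas 0).aemeasurable (measurable_id.pow_const 2).aestronglyMeasurable
    rw [h1, hεident s, h2, hεm2]
  have hYint : ∀ s : ℤ, ∫ ω, Y s ω ∂P = α₁ := by
    intro s; simp only [hYdef, integral_const_mul, hε2 s, mul_one]
  intro s k
  induction k with
  | zero => simpa using hYint (s - 0)
  | succ k ih =>
    have hinj : Set.InjOn (fun i : ℕ => s - (i : ℤ)) (Finset.range (k+1)) := by
      intro a _ b _ h; simp only at h; omega
    have hnotmem : s - ((k+1 : ℕ) : ℤ) ∉ (Finset.range (k+1)).image (fun i : ℕ => s - (i : ℤ)) := by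
      simp only [Finset.mem_image, Finset.mem_range]
      rintro ⟨a, ha, h⟩; omega
    have hindep2 : IndepFun (fun ω => ∏ i ∈ Finset.range (k+1), Y (s - i) ω)
        (Y (s - ((k+1 : ℕ) : ℤ))) P := by
      have := hYindep.indepFun_finset_prod_of_notMem hYmeas hnotmem
      have heq : (∏ j ∈ (Finset.range (k+1)).image (fun i : ℕ => s - (i : ℤ)), Y j)
          = fun ω => ∏ i ∈ Finset.range (k+1), Y (s - i) ω := by
        funext ω
        simp only [Finset.prod_apply]
        rw [Finset.prod_image hinj]
      rwa [heq] at this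
    have hexp : (fun ω => ∏ i ∈ Finset.range (k+1+1), Y (s - i) ω)
        = (fun ω => ∏ i ∈ Finset.range (k+1), Y (s - i) ω) * (Y (s - ((k+1 : ℕ) : ℤ))) := by
      funext ω; simp [Finset.prod_range_succ]
    calc ∫ ω, ∏ i ∈ Finset.range (k+1+1), Y (s - i) ω ∂P
        = ∫ ω, ((fun ω => ∏ i ∈ Finset.range (k+1), Y (s - i) ω)
            * (Y (s - ((k+1 : ℕ) : ℤ)))) ω ∂P := by rw [hexp]
      _ = (∫ ω, ∏ i ∈ Finset.range (k+1), Y (s - i) ω ∂P)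
            * ∫ ω, Y (s - ((k+1 : ℕ) : ℤ)) ω ∂P := by
          exact hindep2.integral_mul_eq_mul_integral
            (Finset.measurable_prod _ (fun i _ => hYmeas _)).aestronglyMeasurable
            (hYmeas _).aestronglyMeasurable
      _ = α₁ ^ (k+1) * α₁ := by rw [ih, hYint]
      _ = α₁ ^ (k+1+1) := by ring

/-- Pointwise iterated form of the recursion. -/
lemma aux_iter {Ω : Type*} (ω : Ω)
    (ε L : ℤ → Ω → ℝ) (α₀ α₁ l₁ : ℝ) (τ : ℤ → Ω → ℝ)
    (hrec : ∀ t : ℤ, τ (t + 1) ω = α₁ * (ε t ω) ^ 2 * τ t ω + α₀ + l₁ * L t ω) :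
    ∀ (t : ℤ) (k : ℕ), τ t ω =
      (∑ i ∈ Finset.range (k+1), (∏ j ∈ Finset.range i, (α₁ * (ε (t - 1 - j) ω) ^ 2))
        * (α₀ + l₁ * L (t - 1 - i) ω))
      + (∏ i ∈ Finset.range (k+1), (α₁ * (ε (t - 1 - i) ω) ^ 2)) * τ (t - 1 - k) ω := by
  intro t k
  induction k with
  | zero =>
    have h := hrec (t - 1)
    have h0 : t - 1 + 1 = t := by ring
    rw [h0] at h
    rw [Finset.sum_range_one, Finset.prod_range_one, Finset.prod_range_zero, h]
    norm_num; ring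
  | succ k ih =>
    have hc : ((k+1:ℕ):ℤ) = (k:ℤ)+1 := by push_cast; ring
    have hs : t - 1 - ((k:ℤ)+1) + 1 = t - 1 - k := by ring
    have h := hrec (t - 1 - ((k:ℤ)+1))
    rw [hs] at h
    rw [Finset.prod_range_succ, Finset.sum_range_succ, hc, ih, h]
    ring

/-- Uniqueness of the solution, within the class sup_t E[σ_t²] < ∞, of the generalized ARCH model
`σ_{t+1}² = α₁ ε_t² σ_t² + α₀ + l₁ L_t`, given by the random series
`σ_{t+1}² = ∑_{i=0}^∞ (∏_{j=0}^{i-1} α₁ ε_{t-j}²)(α₀ + l₁ L_{t-i})`. -/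
theorem stmt_7 {Ω : Type*} [MeasurableSpace Ω] (P : Measure Ω) [IsProbabilityMeasure P]
    (ε L : ℤ → Ω → ℝ) (α₀ α₁ l₁ : ℝ)
    (hα₀ : 0 ≤ α₀) (hα₁ : 0 < α₁) (hl₁ : 0 < l₁) (hα₁' : α₁ < 1)
    (hεmeas : ∀ t, Measurable (ε t))
    (hLmeas : ∀ t, Measurable (L t))
    -- (ε_t) is i.i.d. with mean 0 and unit second moment
    (hεindep : iIndepFun ε P)
    (hεident : ∀ t : ℤ, Measure.map (ε t) P = Measure.map (ε 0) P)
    (hεmean : ∫ ω, ε 0 ω ∂P = 0)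
    (hεm2 : ∫ ω, (ε 0 ω) ^ 2 ∂P = 1)
    -- (L_t) is strictly stationary, positive, mean one, square integrable
    (hLpos : ∀ t, ∀ ω, 0 < L t ω)
    (hLstat : ∀ k : ℤ, Measure.map (fun ω => fun t => L (t + k) ω) P
      = Measure.map (fun ω => fun t => L t ω) P)
    (hLmean : ∫ ω, L 0 ω ∂P = 1)
    (hL2 : MemLp (L 0) 2 P)
    -- (L_t) is independent of (ε_t)
    (hindep : IndepFun (fun ω => fun t : ℤ => ε t ω) (fun ω => fun t : ℤ => L t ω) P)
    -- τ is any solution of the recursion with uniformly bounded means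
    (τ : ℤ → Ω → ℝ)
    (hτmeas : ∀ t, Measurable (τ t))
    (hτpos : ∀ t, ∀ ω, 0 ≤ τ t ω)
    (hτint : ∀ t, Integrable (τ t) P)
    (hτbdd : ∃ M : ℝ, ∀ t : ℤ, ∫ ω, τ t ω ∂P ≤ M)
    (hτrec : ∀ᵐ ω ∂P, ∀ t : ℤ, τ (t + 1) ω = α₁ * (ε t ω) ^ 2 * τ t ω + α₀ + l₁ * L t ω)
    -- τ_{t-k} is independent of the innovations ε_{t-k}, ..., ε_t
    (hτindep : ∀ (t : ℤ) (k : ℕ), IndepFun (τ (t - k))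
      (fun ω => ∏ i ∈ Finset.range (k + 1), α₁ * (ε (t - i) ω) ^ 2) P) :
    -- then τ coincides a.s. with the random series solution
    ∀ t : ℤ, τ t =ᵐ[P]
      fun ω => ∑' i : ℕ, (∏ j ∈ Finset.range i, α₁ * (ε (t - 1 - j) ω) ^ 2)
        * (α₀ + l₁ * L (t - 1 - i) ω) := by
  obtain ⟨M, hM⟩ := hτbdd
  have hprod := aux_prod_integral P ε α₁ hα₁ hεmeas hεindep hεident hεm2
  intro t
  set g : ℕ → Ω → ℝ := fun i ω => (∏ j ∈ Finset.range i, (α₁ * (ε (t - 1 - j) ω) ^ 2))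
    * (α₀ + l₁ * L (t - 1 - i) ω) with hgdef
  set R : ℕ → Ω → ℝ := fun k ω =>
    τ (t - 1 - k) ω * ∏ i ∈ Finset.range (k+1), (α₁ * (ε (t - 1 - i) ω) ^ 2) with hRdef
  have hprodnn : ∀ (k : ℕ) (ω : Ω),
      0 ≤ ∏ i ∈ Finset.range k, (α₁ * (ε (t - 1 - i) ω) ^ 2) :=
    fun k ω => Finset.prod_nonneg fun i _ => mul_nonneg hα₁.le (sq_nonneg _)
  have hgnn : ∀ i ω, 0 ≤ g i ω := fun i ω => mul_nonneg (hprodnn i ω)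
    (add_nonneg hα₀ (mul_nonneg hl₁.le (hLpos _ ω).le))
  have hRnn : ∀ k ω, 0 ≤ R k ω := fun k ω => mul_nonneg (hτpos _ ω) (hprodnn (k+1) ω)
  have hRmeas : ∀ k, Measurable (R k) := fun k => (hτmeas _).mul
    (Finset.measurable_prod _ fun i _ => measurable_const.mul ((hεmeas _).pow_const 2))
  -- integral bound on the remainder
  have hRint_le : ∀ k, ∫ ω, R k ω ∂P ≤ M * α₁ ^ (k+1) := by
    intro k
    have hmul : ∫ ω, (τ (t - 1 - (k:ℤ))
          * fun ω => ∏ i ∈ Finset.range (k+1), (α₁ * (ε (t - 1 - i) ω) ^ 2)) ω ∂P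
        = (∫ ω, τ (t - 1 - (k:ℤ)) ω ∂P)
          * ∫ ω, ∏ i ∈ Finset.range (k+1), (α₁ * (ε (t - 1 - i) ω) ^ 2) ∂P :=
      (hτindep (t - 1) k).integral_mul_eq_mul_integral
        (hτmeas _).aestronglyMeasurable
        (Finset.measurable_prod _ fun i _ =>
          measurable_const.mul ((hεmeas _).pow_const 2)).aestronglyMeasurable
    have h1 : ∫ ω, R k ω ∂P = (∫ ω, τ (t - 1 - (k:ℤ)) ω ∂P) * α₁ ^ (k+1) := by
      rw [hRdef]
      simpa [hprod (t - 1) k] using hmul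
    rw [h1]
    exact mul_le_mul_of_nonneg_right (hM _) (pow_nonneg hα₁.le _)
  -- the a.e. iterated identity
  have hkey : ∀ᵐ ω ∂P, ∀ k : ℕ, τ t ω = (∑ i ∈ Finset.range (k+1), g i ω) + R k ω := by
    filter_upwards [hτrec] with ω hrec k
    have h := aux_iter ω ε L α₀ α₁ l₁ τ hrec t k
    rw [h, hgdef, hRdef]; ring
  have hae : ∀ᵐ ω ∂P, ∀ n : ℕ, ∑ i ∈ Finset.range n, g i ω ≤ τ t ω := by
    filter_upwards [hkey] with ω hk n
    cases n with
    | zero => simpa using hτpos t ω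
    | succ k => have := hk k; have := hRnn k ω; linarith
  have hsummable : ∀ᵐ ω ∂P, Summable (fun i => g i ω) := by
    filter_upwards [hae] with ω h
    exact summable_of_sum_range_le (fun i => hgnn i ω) h
  set Stail : Ω → ℝ := fun ω => ∑' i, g i ω with hSdef
  set F : Ω → ℝ := fun ω => τ t ω - Stail ω with hFdef
  have htends : ∀ᵐ ω ∂P, Tendsto (fun k => R k ω) atTop (nhds (F ω)) := by
    filter_upwards [hkey, hsummable] with ω hk hs
    have h1 : Tendsto (fun k : ℕ => ∑ i ∈ Finset.range (k+1), g i ω) atTop (nhds (Stail ω)) :=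
      (hs.hasSum.tendsto_sum_nat).comp (tendsto_add_atTop_nat 1)
    have h2 : (fun k => R k ω) = fun k => τ t ω - ∑ i ∈ Finset.range (k+1), g i ω := by
      funext k; rw [hk k]; ring
    rw [h2]
    simpa [hFdef] using (tendsto_const_nhds (x := τ t ω) (f := atTop)).sub h1
  have hFmeas : AEMeasurable F P :=
    aemeasurable_of_tendsto_metrizable_ae atTop (fun k => (hRmeas k).aemeasurable) htends
  have hFnn : 0 ≤ᵐ[P] F := by
    filter_upwards [htends] with ω h
    exact ge_of_tendsto h (Eventually.of_forall fun k => hRnn k ω)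
  have hFbd : ∀ᵐ ω ∂P, ‖F ω‖ ≤ τ t ω := by
    filter_upwards [hFnn] with ω h
    rw [Real.norm_eq_abs, abs_of_nonneg h]
    have hS : 0 ≤ Stail ω := tsum_nonneg fun i => hgnn i ω
    simp only [hFdef]; linarith
  have hFint : Integrable F P :=
    Integrable.mono' (hτint t) hFmeas.aestronglyMeasurable hFbd
  have hRint : ∀ k, Integrable (R k) P := by
    intro k
    refine Integrable.mono' (hτint t) (hRmeas k).aestronglyMeasurable ?_
    filter_upwards [hkey] with ω hk
    rw [Real.norm_eq_abs, abs_of_nonneg (hRnn k ω)]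
    have hsum : 0 ≤ ∑ i ∈ Finset.range (k+1), g i ω :=
      Finset.sum_nonneg fun i _ => hgnn i ω
    linarith [hk k]
  have hFleR : ∀ k : ℕ, F ≤ᵐ[P] R k := by
    intro k
    filter_upwards [hkey, hsummable] with ω hk hs
    have h1 : ∑ i ∈ Finset.range (k+1), g i ω ≤ Stail ω :=
      Summable.sum_le_tsum (Finset.range (k+1)) (fun i _ => hgnn i ω) hs
    simp only [hFdef]; linarith [hk k]
  have hFle : ∀ k : ℕ, ∫ ω, F ω ∂P ≤ M * α₁ ^ (k+1) := fun k =>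
    le_trans (integral_mono_ae hFint (hRint k) (hFleR k)) (hRint_le k)
  have hlim : Tendsto (fun k : ℕ => M * α₁ ^ (k+1)) atTop (nhds 0) := by
    have h := (tendsto_pow_atTop_nhds_zero_of_lt_one hα₁.le hα₁').comp
      (tendsto_add_atTop_nat 1)
    simpa using h.const_mul M
  have h0 : ∫ ω, F ω ∂P ≤ 0 := ge_of_tendsto hlim (Eventually.of_forall hFle)
  have hz : ∫ ω, F ω ∂P = 0 := le_antisymm h0 (integral_nonneg_of_ae hFnn)
  have hF0 : F =ᵐ[P] 0 := (integral_eq_zero_iff_of_nonneg_ae hFnn hFint).mp hz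
  filter_upwards [hF0] with ω h
  have h' : τ t ω - Stail ω = 0 := h
  have := sub_eq_zero.mp h'
  exact this
end

section
/- Suppose α_1 < 1/√(E[ε_0⁴]) and sup_{t∈ℤ} E[σ_t⁴] ≤ M_2 < ∞ in the generalized ARCH model with A_t = α_1 ε_t². Then (∏_{i=0}^{k} A_{t−i}) σ_{t−k}² → 0 almost surely as k → ∞. -/
open MeasureTheory Filter ProbabilityTheory

/-- If `α₁ < 1/√(E[ε₀⁴])` and `sup_t E[σ_t⁴] ≤ M₂ < ∞`, then
`(∏_{i=0}^k A_{t-i}) σ_{t-k}² → 0` almost surely as `k → ∞`, where `A_t = α₁ ε_t²`. -/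
theorem stmt_9 {Ω : Type*} [MeasurableSpace Ω] (P : Measure Ω) [IsProbabilityMeasure P]
    (ε : ℤ → Ω → ℝ) (σsq : ℤ → Ω → ℝ) (α₁ M₁ M₂ : ℝ)
    (hα₁ : 0 < α₁) (hεm4 : Integrable (fun ω => (ε 0 ω) ^ 4) P)
    (hα₁' : α₁ < 1 / Real.sqrt (∫ ω, (ε 0 ω) ^ 4 ∂P))
    (hεmeas : ∀ t, Measurable (ε t))
    (hεindep : iIndepFun ε P)
    (hεident : ∀ t : ℤ, Measure.map (ε t) P = Measure.map (ε 0) P)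
    (hεm2 : ∫ ω, (ε 0 ω) ^ 2 ∂P = 1)
    (hσmeas : ∀ t, Measurable (σsq t))
    (hσpos : ∀ t, ∀ ω, 0 ≤ σsq t ω)
    (hσint : ∀ t, Integrable (σsq t) P)
    (hσbdd : ∀ t : ℤ, ∫ ω, σsq t ω ∂P ≤ M₁)
    (hσ4int : ∀ t, Integrable (fun ω => (σsq t ω) ^ 2) P)
    (hσbdd4 : ∀ t : ℤ, ∫ ω, (σsq t ω) ^ 2 ∂P ≤ M₂)
    -- σ_{t-k}² is independent of ε_{t-k}, ..., ε_t
    (hσindep : ∀ (t : ℤ) (k : ℕ), IndepFun (σsq (t - k))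
      (fun ω => ∏ i ∈ Finset.range (k + 1), α₁ * (ε (t - i) ω) ^ 2) P) :
    ∀ t : ℤ, ∀ᵐ ω ∂P, Tendsto (fun k : ℕ =>
        (∏ i ∈ Finset.range (k + 1), α₁ * (ε (t - i) ω) ^ 2) * σsq (t - k) ω)
      atTop (nhds 0) := by
  -- The family `g s = α₁ * ε s ^ 2`
  set g : ℤ → Ω → ℝ := fun s ω => α₁ * (ε s ω) ^ 2 with hgdef
  have hgmeas : ∀ s, Measurable (g s) := fun s => measurable_const.mul ((hεmeas s).pow_const 2)
  have hgindep : iIndepFun g P :=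
    hεindep.comp (fun _ (x : ℝ) => α₁ * x ^ 2)
      (fun _ => measurable_const.mul (measurable_id.pow_const 2))
  -- integrability of ε₀²
  have hε0sq_int : Integrable (fun ω => (ε 0 ω) ^ 2) P := by
    have h1 : Integrable (fun ω => 1 + (ε 0 ω) ^ 4) P := (integrable_const 1).add hεm4
    refine h1.mono ((hεmeas 0).pow_const 2).aestronglyMeasurable (ae_of_all _ fun ω => ?_)
    rw [Real.norm_eq_abs, Real.norm_eq_abs, abs_of_nonneg (sq_nonneg _)]
    have h2 : 1 + (ε 0 ω) ^ 4 ≤ |1 + (ε 0 ω) ^ 4| := le_abs_self _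
    nlinarith [sq_nonneg ((ε 0 ω) ^ 2 - 1), sq_nonneg (ε 0 ω)]
  -- identical distribution consequences
  have hint_sq : ∀ s : ℤ, Integrable (fun ω => (ε s ω) ^ 2) P := by
    intro s
    have h : Integrable (fun x : ℝ => x ^ 2) (Measure.map (ε s) P) := by
      rw [hεident s]
      exact (integrable_map_measure (measurable_id.pow_const 2).aestronglyMeasurable
        (hεmeas 0).aemeasurable).mpr hε0sq_int
    exact (integrable_map_measure (measurable_id.pow_const 2).aestronglyMeasurable
      (hεmeas s).aemeasurable).mp h
  have hident_sq : ∀ s : ℤ, ∫ ω, (ε s ω) ^ 2 ∂P = 1 := by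
    intro s
    have h1 : ∫ ω, (ε s ω) ^ 2 ∂P = ∫ x, x ^ 2 ∂(Measure.map (ε s) P) :=
      (integral_map (f := fun x : ℝ => x ^ 2) (hεmeas s).aemeasurable
        (measurable_id.pow_const 2).aestronglyMeasurable).symm
    have h2 : ∫ x, x ^ 2 ∂(Measure.map (ε 0) P) = ∫ ω, (ε 0 ω) ^ 2 ∂P :=
      integral_map (f := fun x : ℝ => x ^ 2) (hεmeas 0).aemeasurable
        (measurable_id.pow_const 2).aestronglyMeasurable
    rw [h1, hεident s, h2]
    exact hεm2
  have hgint : ∀ s : ℤ, Integrable (g s) P := fun s => (hint_sq s).const_mul α₁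
  have hgintegral : ∀ s : ℤ, ∫ ω, g s ω ∂P = α₁ := by
    intro s
    simp only [hgdef]
    rw [integral_const_mul, hident_sq s, mul_one]
  -- α₁ < 1
  have hε4ge1 : (1:ℝ) ≤ ∫ ω, (ε 0 ω) ^ 4 ∂P := by
    have hmem : MemLp (fun ω => (ε 0 ω) ^ 2) 2 P := by
      refine (memLp_two_iff_integrable_sq
        ((hεmeas 0).pow_const 2).aestronglyMeasurable).2 ?_
      have h : (fun x => ((ε 0 x) ^ 2) ^ 2) = fun ω => (ε 0 ω) ^ 4 := by
        funext ω; ring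
      simpa [h] using hεm4
    have hvar := variance_nonneg (fun ω => (ε 0 ω) ^ 2) P
    rw [variance_eq_sub hmem] at hvar
    have h1 : P[(fun ω => (ε 0 ω) ^ 2) ^ 2] = ∫ ω, (ε 0 ω) ^ 4 ∂P := by
      apply integral_congr_ae; filter_upwards with ω; simp [Pi.pow_apply]; ring
    have h2 : P[fun ω => (ε 0 ω) ^ 2] = 1 := hεm2
    rw [h1, h2] at hvar
    linarith
  have hα₁1 : α₁ < 1 := by
    have hs : (1:ℝ) ≤ Real.sqrt (∫ ω, (ε 0 ω) ^ 4 ∂P) := by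
      rw [show (1:ℝ) = Real.sqrt 1 by simp]
      exact Real.sqrt_le_sqrt hε4ge1
    calc α₁ < 1 / Real.sqrt (∫ ω, (ε 0 ω) ^ 4 ∂P) := hα₁'
      _ ≤ 1 := by rw [div_le_one (by linarith)]; exact hs
  intro t
  -- integral of the product
  have key : ∀ k : ℕ, Integrable (fun ω => ∏ i ∈ Finset.range (k + 1), g (t - i) ω) P ∧
      ∫ ω, ∏ i ∈ Finset.range (k + 1), g (t - i) ω ∂P = α₁ ^ (k + 1) := by
    intro k
    induction k with
    | zero =>
      constructor
      · simpa using hgint t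
      · simpa using hgintegral t
    | succ n ih =>
      have hprod_eq : (∏ i ∈ Finset.range (n + 1), g (t - i)) =
          fun ω => ∏ i ∈ Finset.range (n + 1), g (t - i) ω := by
        funext ω; simp [Finset.prod_apply]
      have hindep : IndepFun (fun ω => ∏ i ∈ Finset.range (n + 1), g (t - i) ω)
          (g (t - ((n:ℤ) + 1))) P := by
        have hi : (t - ((n:ℤ) + 1)) ∉ (Finset.range (n + 1)).image (fun i : ℕ => t - (i : ℤ)) := by
          simp only [Finset.mem_image, Finset.mem_range, not_exists]
          intro j hj
          omega
        have h := hgindep.indepFun_finsetProd_of_notMem hgmeas hi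
        rw [Finset.prod_image (by intro a _ b _ h'; simpa using h'), hprod_eq] at h
        exact h
      have hmul : (fun ω => ∏ i ∈ Finset.range (n + 2), g (t - i) ω) =
          (fun ω => ∏ i ∈ Finset.range (n + 1), g (t - i) ω) * g (t - ((n:ℤ) + 1)) := by
        funext ω
        rw [Finset.prod_range_succ]
        push_cast
        rfl
      constructor
      · rw [hmul]
        exact hindep.integrable_mul ih.1 (hgint _)
      · rw [hmul, hindep.integral_mul_eq_mul_integral ih.1.aestronglyMeasurable (hgint _).aestronglyMeasurable, ih.2, hgintegral]
        ring
  -- the sequence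
  set X : ℕ → Ω → ℝ := fun k ω =>
    (∏ i ∈ Finset.range (k + 1), α₁ * (ε (t - i) ω) ^ 2) * σsq (t - k) ω with hXdef
  have hXg : ∀ k ω, X k ω = (∏ i ∈ Finset.range (k + 1), g (t - i) ω) * σsq (t - k) ω :=
    fun k ω => rfl
  have hM₁ : 0 ≤ M₁ := le_trans (integral_nonneg (hσpos 0)) (hσbdd 0)
  have hXnonneg : ∀ k ω, 0 ≤ X k ω := by
    intro k ω
    apply mul_nonneg _ (hσpos _ _)
    exact Finset.prod_nonneg fun i _ => mul_nonneg hα₁.le (sq_nonneg _)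
  have hXint : ∀ k, Integrable (X k) P := by
    intro k
    exact (hσindep t k).symm.integrable_mul (key k).1 (hσint _)
  have hXle : ∀ k, ∫ ω, X k ω ∂P ≤ α₁ ^ (k + 1) * M₁ := by
    intro k
    have h := (hσindep t k).symm.integral_mul_eq_mul_integral (key k).1.aestronglyMeasurable (hσint _).aestronglyMeasurable
    have heq : ∫ ω, X k ω ∂P =
        (∫ ω, ∏ i ∈ Finset.range (k + 1), g (t - i) ω ∂P) * ∫ ω, σsq (t - k) ω ∂P := h
    rw [heq, (key k).2]
    exact mul_le_mul_of_nonneg_left (hσbdd _) (pow_nonneg hα₁.le _)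
  have hXmeas : ∀ k, Measurable (X k) := by
    intro k
    exact (Finset.measurable_prod _ fun i _ =>
      measurable_const.mul ((hεmeas _).pow_const 2)).mul (hσmeas _)
  -- summability of the bound
  have hsummable : Summable (fun k : ℕ => α₁ ^ (k + 1) * M₁) := by
    have := ((summable_geometric_of_lt_one hα₁.le hα₁1).mul_left α₁).mul_right M₁
    refine this.congr fun k => ?_
    rw [pow_succ]; ring
  have hsum : ∑' k, ∫⁻ ω, ENNReal.ofReal (X k ω) ∂P ≠ ⊤ := by
    have heq : ∀ k, ∫⁻ ω, ENNReal.ofReal (X k ω) ∂P = ENNReal.ofReal (∫ ω, X k ω ∂P) :=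
      fun k => (ofReal_integral_eq_lintegral_ofReal (hXint k)
        (ae_of_all _ (hXnonneg k))).symm
    have hle : ∑' k, ∫⁻ ω, ENNReal.ofReal (X k ω) ∂P ≤
        ∑' k, ENNReal.ofReal (α₁ ^ (k + 1) * M₁) := by
      refine ENNReal.tsum_le_tsum fun k => ?_
      rw [heq k]
      exact ENNReal.ofReal_le_ofReal (hXle k)
    refine ne_top_of_le_ne_top ?_ hle
    rw [← ENNReal.ofReal_tsum_of_nonneg
      (fun k => mul_nonneg (pow_nonneg hα₁.le _) hM₁) hsummable]
    exact ENNReal.ofReal_ne_top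
  have h1 : ∫⁻ ω, ∑' k, ENNReal.ofReal (X k ω) ∂P ≠ ⊤ := by
    rw [lintegral_tsum fun k => ((hXmeas k).ennreal_ofReal).aemeasurable]
    exact hsum
  have h2 : ∀ᵐ ω ∂P, ∑' k, ENNReal.ofReal (X k ω) ≠ ⊤ := by
    have := ae_lt_top (Measurable.ennreal_tsum fun k => (hXmeas k).ennreal_ofReal) h1
    filter_upwards [this] with ω hω using hω.ne
  filter_upwards [h2] with ω hω
  have h3 : Tendsto (fun k => ENNReal.ofReal (X k ω)) atTop (nhds 0) :=
    ENNReal.tendsto_atTop_zero_of_tsum_ne_top hω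
  have h4 : Tendsto (fun k => (ENNReal.ofReal (X k ω)).toReal) atTop (nhds 0) := by
    have := (ENNReal.tendsto_toReal (show (0:ENNReal) ≠ ⊤ by simp)).comp h3
    exact this
  refine h4.congr fun k => ?_
  exact ENNReal.toReal_ofReal (hXnonneg k ω)
end

section
/- In the generalized ARCH model with E[ε_0⁴] < ∞, the stationary solution satisfies E[σ_0⁴] < ∞ if and only if α_1 < 1/√(E[ε_0⁴]). -/
open MeasureTheory Filter ProbabilityTheory
open scoped ENNReal NNReal

/-- Expectation of a product of independent `ℝ≥0∞`-valued random variables. -/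
private lemma aux_lintegral_prod_indep {Ω ι : Type*} [MeasurableSpace Ω] {P : Measure Ω}
    [IsProbabilityMeasure P] {f : ι → Ω → ℝ≥0∞}
    (hmeas : ∀ i, Measurable (f i))
    (hind : iIndepFun f P) (s : Finset ι) :
    ∫⁻ ω, ∏ i ∈ s, f i ω ∂P = ∏ i ∈ s, ∫⁻ ω, f i ω ∂P := by
  classical
  induction s using Finset.induction_on with
  | empty => simp
  | @insert a s ha ih =>
    have hip : IndepFun (fun ω => ∏ i ∈ s, f i ω) (f a) P := by
      have h := hind.indepFun_finset_prod_of_notMem hmeas ha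
      have e : (∏ j ∈ s, f j) = fun ω => ∏ i ∈ s, f i ω := by
        funext ω; simp [Finset.prod_apply]
      rwa [e] at h
    have hmp : Measurable (fun ω => ∏ i ∈ s, f i ω) :=
      Finset.measurable_prod _ (fun i _ => hmeas i)
    simp_rw [Finset.prod_insert ha]
    have : ∫⁻ ω, f a ω * ∏ i ∈ s, f i ω ∂P
        = (∫⁻ ω, ∏ i ∈ s, f i ω ∂P) * ∫⁻ ω, f a ω ∂P := by
      simp_rw [mul_comm (f a _)]
      exact lintegral_mul_eq_lintegral_mul_lintegral_of_indepFun'' hmp.aemeasurable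
        (hmeas a).aemeasurable hip
    rw [this, ih, mul_comm]

/-- Minkowski inequality for finite sums in `L²` (lintegral form). -/
private lemma aux_minkowski {Ω ι : Type*} [MeasurableSpace Ω] {P : Measure Ω}
    {f : ι → Ω → ℝ≥0∞} (hmeas : ∀ i, Measurable (f i)) (s : Finset ι) :
    (∫⁻ ω, (∑ i ∈ s, f i ω) ^ (2:ℝ) ∂P) ^ (1/(2:ℝ))
      ≤ ∑ i ∈ s, (∫⁻ ω, (f i ω) ^ (2:ℝ) ∂P) ^ (1/(2:ℝ)) := by
  classical
  induction s using Finset.induction_on with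
  | empty => simp
  | @insert a s ha ih =>
    simp_rw [Finset.sum_insert ha]
    have h := ENNReal.lintegral_Lp_add_le (μ := P) (f := f a)
      (g := fun ω => ∑ i ∈ s, f i ω) (hmeas a).aemeasurable
      (Finset.measurable_sum _ (fun i _ => hmeas i)).aemeasurable (by norm_num : (1:ℝ) ≤ 2)
    calc (∫⁻ ω, (f a ω + ∑ i ∈ s, f i ω) ^ (2:ℝ) ∂P) ^ (1/(2:ℝ))
        ≤ (∫⁻ ω, (f a ω) ^ (2:ℝ) ∂P) ^ (1/(2:ℝ))
          + (∫⁻ ω, (∑ i ∈ s, f i ω) ^ (2:ℝ) ∂P) ^ (1/(2:ℝ)) := by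
          simpa [Pi.add_apply] using h
      _ ≤ _ := add_le_add_right ih _

/-- Jensen: square of the mean is at most the mean of the square. -/
private lemma aux_sq_integral_le {Ω : Type*} [MeasurableSpace Ω] {P : Measure Ω}
    [IsProbabilityMeasure P] {X : Ω → ℝ} (hX : MemLp X 2 P) :
    (∫ ω, X ω ∂P) ^ 2 ≤ ∫ ω, (X ω) ^ 2 ∂P := by
  have h := variance_nonneg X P
  rw [variance_eq_sub hX] at h
  have : ∫ ω, (X ω) ^ 2 ∂P = ∫ ω, (X ^ 2) ω ∂P := by simp [Pi.pow_apply]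
  rw [this]
  linarith [h]

/-- Fourth moment of the stationary ARCH solution: `E[σ₀⁴] < ∞` iff `α₁ < 1/√(E[ε₀⁴])`. -/
theorem stmt_10 {Ω : Type*} [MeasurableSpace Ω] (P : Measure Ω) [IsProbabilityMeasure P]
    (ε L : ℤ → Ω → ℝ) (α₀ α₁ l₁ : ℝ)
    (hα₀ : 0 ≤ α₀) (hα₁ : 0 < α₁) (hl₁ : 0 < l₁) (hα₁' : α₁ < 1)
    (hεmeas : ∀ t, Measurable (ε t))
    (hLmeas : ∀ t, Measurable (L t))
    -- (ε_t) is i.i.d. with mean 0 and unit second moment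
    (hεindep : iIndepFun ε P)
    (hεident : ∀ t : ℤ, Measure.map (ε t) P = Measure.map (ε 0) P)
    (hεmean : ∫ ω, ε 0 ω ∂P = 0)
    (hεm2 : ∫ ω, (ε 0 ω) ^ 2 ∂P = 1)
    -- (L_t) is strictly stationary, positive, mean one, square integrable
    (hLpos : ∀ t, ∀ ω, 0 < L t ω)
    (hLstat : ∀ k : ℤ, Measure.map (fun ω => fun t => L (t + k) ω) P
      = Measure.map (fun ω => fun t => L t ω) P)
    (hLmean : ∫ ω, L 0 ω ∂P = 1)
    (hL2 : MemLp (L 0) 2 P)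
    -- (L_t) is independent of (ε_t)
    (hindep : IndepFun (fun ω => fun t : ℤ => ε t ω) (fun ω => fun t : ℤ => L t ω) P)
    -- σsq is the stationary series solution
    (σsq : ℤ → Ω → ℝ)
    (hσ : ∀ t : ℤ, ∀ ω, σsq t ω =
      ∑' i : ℕ, (∏ j ∈ Finset.range i, α₁ * (ε (t - 1 - j) ω) ^ 2)
        * (α₀ + l₁ * L (t - 1 - i) ω))
    (hεm4 : Integrable (fun ω => (ε 0 ω) ^ 4) P) :
    Integrable (fun ω => (σsq 0 ω) ^ 2) P ↔
      α₁ < 1 / Real.sqrt (∫ ω, (ε 0 ω) ^ 4 ∂P) := by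
  classical
  set m₄ : ℝ := ∫ ω, (ε 0 ω) ^ 4 ∂P with hm₄def
  -- basic integrability facts
  have hεint2 : Integrable (fun ω => (ε 0 ω) ^ 2) P := by
    by_contra h
    rw [integral_undef h] at hεm2
    norm_num at hεm2
  have hLint : Integrable (L 0) P := hL2.integrable one_le_two
  -- transfer of lintegrals using identical distributions
  have hεmap : ∀ (A : ℝ → ℝ≥0∞), Measurable A → ∀ t : ℤ,
      ∫⁻ ω, A (ε t ω) ∂P = ∫⁻ ω, A (ε 0 ω) ∂P := by
    intro A hA t
    rw [← lintegral_map hA (hεmeas t), hεident t, lintegral_map hA (hεmeas 0)]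
  have hLid : ∀ t : ℤ, Measure.map (L t) P = Measure.map (L 0) P := by
    intro t
    have hF : ∀ k : ℤ, Measurable (fun ω => fun s : ℤ => L (s + k) ω) :=
      fun k => measurable_pi_lambda _ (fun s => hLmeas (s + k))
    have h0 : Measurable (fun x : ℤ → ℝ => x 0) := measurable_pi_apply 0
    have e1 : L t = (fun x : ℤ → ℝ => x 0) ∘ (fun ω => fun s : ℤ => L (s + t) ω) := by
      funext ω; simp
    have e0 : L 0 = (fun x : ℤ → ℝ => x 0) ∘ (fun ω => fun s : ℤ => L s ω) := rfl
    calc Measure.map (L t) P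
        = Measure.map (fun x : ℤ → ℝ => x 0) (Measure.map (fun ω => fun s : ℤ => L (s + t) ω) P) := by
          rw [Measure.map_map h0 (hF t), ← e1]
      _ = Measure.map (fun x : ℤ → ℝ => x 0) (Measure.map (fun ω => fun s : ℤ => L s ω) P) := by
          rw [hLstat t]
      _ = Measure.map (L 0) P := by
          rw [Measure.map_map h0 (measurable_pi_lambda _ (fun s => hLmeas s)), ← e0]
  have hLmap : ∀ (B : ℝ → ℝ≥0∞), Measurable B → ∀ t : ℤ,
      ∫⁻ ω, B (L t ω) ∂P = ∫⁻ ω, B (L 0 ω) ∂P := by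
    intro B hB t
    rw [← lintegral_map hB (hLmeas t), hLid t, lintegral_map hB (hLmeas 0)]
  -- second and fourth moments of ε as lintegrals
  have hε2lint : ∀ t : ℤ, ∫⁻ ω, ENNReal.ofReal ((ε t ω) ^ 2) ∂P = 1 := by
    intro t
    have hA : Measurable (fun x : ℝ => ENNReal.ofReal (x ^ 2)) :=
      ENNReal.measurable_ofReal.comp (measurable_id.pow_const 2)
    have h := hεmap (fun x : ℝ => ENNReal.ofReal (x ^ 2)) hA t
    rw [h, ← ofReal_integral_eq_lintegral_ofReal hεint2
      (ae_of_all _ fun ω => sq_nonneg _), hεm2]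
    simp
  have hε4lint : ∀ t : ℤ, ∫⁻ ω, ENNReal.ofReal ((ε t ω) ^ 4) ∂P = ENNReal.ofReal m₄ := by
    intro t
    have hA : Measurable (fun x : ℝ => ENNReal.ofReal (x ^ 4)) :=
      ENNReal.measurable_ofReal.comp (measurable_id.pow_const 4)
    have h := hεmap (fun x : ℝ => ENNReal.ofReal (x ^ 4)) hA t
    rw [h, ← ofReal_integral_eq_lintegral_ofReal hεm4
      (ae_of_all _ fun ω => by positivity)]
  -- 1 ≤ m₄
  have hε2memℒp : MemLp (fun ω => (ε 0 ω) ^ 2) 2 P := by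
    refine (memLp_two_iff_integrable_sq ((hεmeas 0).pow_const 2).aestronglyMeasurable).2 ?_
    exact hεm4.congr (ae_of_all _ fun ω => by ring)
  have hm₄ge : 1 ≤ m₄ := by
    have h := aux_sq_integral_le hε2memℒp
    rw [hεm2] at h
    have h2 : ∫ ω, ((ε 0 ω) ^ 2) ^ 2 ∂P = m₄ := by
      rw [hm₄def]
      exact integral_congr_ae (ae_of_all _ fun ω => by ring)
    rw [h2] at h
    simpa using h
  have hm₄pos : 0 < m₄ := lt_of_lt_of_le one_pos hm₄ge
  -- the constant C₀ = E[(α₀ + l₁ L₀)²]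
  have hY2 : MemLp (fun ω => α₀ + l₁ * L 0 ω) 2 P := by
    exact (memLp_const α₀).add (hL2.const_mul l₁)
  have hYint : Integrable (fun ω => α₀ + l₁ * L 0 ω) P :=
    (integrable_const α₀).add (hLint.const_mul l₁)
  have hYmean : ∫ ω, (α₀ + l₁ * L 0 ω) ∂P = α₀ + l₁ := by
    rw [integral_add (integrable_const α₀) (hLint.const_mul l₁), integral_const,
      integral_const_mul, hLmean]
    simp
  set C₀ : ℝ := ∫ ω, (α₀ + l₁ * L 0 ω) ^ 2 ∂P with hC₀def
  have hC₀pos : 0 < C₀ := by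
    have h := aux_sq_integral_le hY2
    rw [hYmean] at h
    have : 0 < (α₀ + l₁) ^ 2 := by positivity
    linarith
  have hYsqint : Integrable (fun ω => (α₀ + l₁ * L 0 ω) ^ 2) P := hY2.integrable_sq
  have hBlintsq : ∀ t : ℤ,
      ∫⁻ ω, ENNReal.ofReal ((α₀ + l₁ * L t ω) ^ 2) ∂P = ENNReal.ofReal C₀ := by
    intro t
    have hB : Measurable (fun x : ℝ => ENNReal.ofReal ((α₀ + l₁ * x) ^ 2)) :=
      ENNReal.measurable_ofReal.comp
        ((measurable_const.add (measurable_const.mul measurable_id)).pow_const 2)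
    have h := hLmap (fun x : ℝ => ENNReal.ofReal ((α₀ + l₁ * x) ^ 2)) hB t
    rw [h, ← ofReal_integral_eq_lintegral_ofReal hYsqint (ae_of_all _ fun ω => sq_nonneg _)]
  have hBlint1 : ∀ t : ℤ,
      ∫⁻ ω, ENNReal.ofReal (α₀ + l₁ * L t ω) ∂P = ENNReal.ofReal (α₀ + l₁) := by
    intro t
    have hB : Measurable (fun x : ℝ => ENNReal.ofReal (α₀ + l₁ * x)) :=
      ENNReal.measurable_ofReal.comp (measurable_const.add (measurable_const.mul measurable_id))
    have h := hLmap (fun x : ℝ => ENNReal.ofReal (α₀ + l₁ * x)) hB t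
    rw [h, ← ofReal_integral_eq_lintegral_ofReal hYint
      (ae_of_all _ fun ω => by have := (hLpos 0 ω).le; positivity), hYmean]
  -- the key independence computation
  have key : ∀ (A B : ℝ → ℝ≥0∞) (c : ℝ≥0∞), Measurable A → Measurable B →
      (∀ t : ℤ, ∫⁻ ω, A (ε t ω) ∂P = c) → ∀ i : ℕ,
      ∫⁻ ω, (∏ j ∈ Finset.range i, A (ε ((0:ℤ) - 1 - (j:ℕ)) ω))
          * B (L ((0:ℤ) - 1 - (i:ℕ)) ω) ∂P
        = c ^ i * ∫⁻ ω, B (L ((0:ℤ) - 1 - (i:ℕ)) ω) ∂P := by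
    intro A B c hA hB hval i
    have hΦ : Measurable (fun x : ℤ → ℝ => ∏ j ∈ Finset.range i, A (x ((0:ℤ) - 1 - (j:ℕ)))) :=
      Finset.measurable_prod _ (fun j _ => hA.comp (measurable_pi_apply _))
    have hΨ : Measurable (fun x : ℤ → ℝ => B (x ((0:ℤ) - 1 - (i:ℕ)))) :=
      hB.comp (measurable_pi_apply _)
    have hip : IndepFun (fun ω => ∏ j ∈ Finset.range i, A (ε ((0:ℤ) - 1 - (j:ℕ)) ω))
        (fun ω => B (L ((0:ℤ) - 1 - (i:ℕ)) ω)) P := hindep.comp hΦ hΨ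
    have hmp : Measurable (fun ω => ∏ j ∈ Finset.range i, A (ε ((0:ℤ) - 1 - (j:ℕ)) ω)) :=
      Finset.measurable_prod _ (fun j _ => hA.comp (hεmeas _))
    have hmB : Measurable (fun ω => B (L ((0:ℤ) - 1 - (i:ℕ)) ω)) := hB.comp (hLmeas _)
    rw [lintegral_mul_eq_lintegral_mul_lintegral_of_indepFun'' hmp.aemeasurable
      hmB.aemeasurable hip]
    congr 1
    -- expectation of the product over the ε's
    have hinj : Function.Injective (fun j : ℕ => (0:ℤ) - 1 - (j:ℕ)) := by
      intro a b h
      simpa using h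
    have hre : ∀ ω, ∏ j ∈ Finset.range i, A (ε ((0:ℤ) - 1 - (j:ℕ)) ω)
        = ∏ t ∈ (Finset.range i).image (fun j : ℕ => (0:ℤ) - 1 - (j:ℕ)), A (ε t ω) := by
      intro ω
      rw [Finset.prod_image (fun a _ b _ h => hinj h)]
    simp_rw [hre]
    have hii : iIndepFun
        (fun t ω => A (ε t ω)) P := hεindep.comp (fun _ => A) (fun _ => hA)
    rw [aux_lintegral_prod_indep (f := fun t ω => A (ε t ω))
      (fun t => hA.comp (hεmeas t)) hii]
    rw [Finset.prod_congr rfl (fun t _ => hval t), Finset.prod_const,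
      Finset.card_image_of_injective _ hinj, Finset.card_range]
  -- the terms of the series, as ℝ≥0∞-valued functions
  set u : ℕ → Ω → ℝ := fun i ω =>
    (∏ j ∈ Finset.range i, α₁ * (ε ((0:ℤ) - 1 - (j:ℕ)) ω) ^ 2)
      * (α₀ + l₁ * L ((0:ℤ) - 1 - (i:ℕ)) ω) with hudef
  have hu_nonneg : ∀ i ω, 0 ≤ u i ω := fun i ω =>
    mul_nonneg (Finset.prod_nonneg fun j _ => mul_nonneg hα₁.le (sq_nonneg _))
      (add_nonneg hα₀ (mul_nonneg hl₁.le (hLpos _ ω).le))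
  set f : ℕ → Ω → ℝ≥0∞ := fun i ω => ENNReal.ofReal (u i ω) with hfdef
  have hf_eq : ∀ i ω, f i ω
      = (∏ j ∈ Finset.range i, ENNReal.ofReal (α₁ * (ε ((0:ℤ) - 1 - (j:ℕ)) ω) ^ 2))
        * ENNReal.ofReal (α₀ + l₁ * L ((0:ℤ) - 1 - (i:ℕ)) ω) := by
    intro i ω
    rw [hfdef]
    simp only [hudef]
    rw [ENNReal.ofReal_mul (Finset.prod_nonneg fun j _ => mul_nonneg hα₁.le (sq_nonneg _)),
      ENNReal.ofReal_prod_of_nonneg (fun j _ => mul_nonneg hα₁.le (sq_nonneg _))]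
  have hfmeas : ∀ i, Measurable (f i) := by
    intro i
    apply ENNReal.measurable_ofReal.comp
    exact (Finset.measurable_prod _ fun j _ =>
        (measurable_const.mul ((hεmeas _).pow_const 2))).mul
      (measurable_const.add (measurable_const.mul (hLmeas _)))
  set S : Ω → ℝ≥0∞ := fun ω => ∑' i, f i ω with hSdef
  have hSmeas : Measurable S := Measurable.ennreal_tsum hfmeas
  -- first moments of the terms
  have hf1 : ∀ i, ∫⁻ ω, f i ω ∂P = (ENNReal.ofReal α₁) ^ i * ENNReal.ofReal (α₀ + l₁) := by
    intro i
    have hA : Measurable (fun x : ℝ => ENNReal.ofReal (α₁ * x ^ 2)) :=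
      ENNReal.measurable_ofReal.comp (measurable_const.mul (measurable_id.pow_const 2))
    have hB : Measurable (fun x : ℝ => ENNReal.ofReal (α₀ + l₁ * x)) :=
      ENNReal.measurable_ofReal.comp (measurable_const.add (measurable_const.mul measurable_id))
    have hval : ∀ t : ℤ, ∫⁻ ω, ENNReal.ofReal (α₁ * (ε t ω) ^ 2) ∂P = ENNReal.ofReal α₁ := by
      intro t
      have e : ∀ ω, ENNReal.ofReal (α₁ * (ε t ω) ^ 2)
          = ENNReal.ofReal α₁ * ENNReal.ofReal ((ε t ω) ^ 2) := fun ω =>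
        ENNReal.ofReal_mul hα₁.le
      simp_rw [e]
      rw [lintegral_const_mul _ (show Measurable fun ω => ENNReal.ofReal ((ε t ω) ^ 2) from
        ENNReal.measurable_ofReal.comp ((hεmeas t).pow_const 2)), hε2lint t, mul_one]
    have h := key (fun x : ℝ => ENNReal.ofReal (α₁ * x ^ 2))
      (fun x : ℝ => ENNReal.ofReal (α₀ + l₁ * x)) (ENNReal.ofReal α₁) hA hB hval i
    calc ∫⁻ ω, f i ω ∂P
        = ∫⁻ ω, (∏ j ∈ Finset.range i, ENNReal.ofReal (α₁ * (ε ((0:ℤ) - 1 - (j:ℕ)) ω) ^ 2))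
            * ENNReal.ofReal (α₀ + l₁ * L ((0:ℤ) - 1 - (i:ℕ)) ω) ∂P :=
          lintegral_congr fun ω => hf_eq i ω
      _ = _ := by rw [h, hBlint1]
  -- second moments of the terms
  set r : ℝ≥0∞ := ENNReal.ofReal (α₁ ^ 2 * m₄) with hrdef
  have hf2 : ∀ i, ∫⁻ ω, (f i ω) ^ 2 ∂P = r ^ i * ENNReal.ofReal C₀ := by
    intro i
    have hA : Measurable (fun x : ℝ => (ENNReal.ofReal (α₁ * x ^ 2)) ^ 2) :=
      (ENNReal.measurable_ofReal.comp (measurable_const.mul (measurable_id.pow_const 2))).pow_const 2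
    have hB : Measurable (fun x : ℝ => (ENNReal.ofReal (α₀ + l₁ * x)) ^ 2) :=
      (ENNReal.measurable_ofReal.comp
        (measurable_const.add (measurable_const.mul measurable_id))).pow_const 2
    have hval : ∀ t : ℤ, ∫⁻ ω, (ENNReal.ofReal (α₁ * (ε t ω) ^ 2)) ^ 2 ∂P = r := by
      intro t
      have e : ∀ ω, (ENNReal.ofReal (α₁ * (ε t ω) ^ 2)) ^ 2
          = ENNReal.ofReal (α₁ ^ 2) * ENNReal.ofReal ((ε t ω) ^ 4) := by
        intro ω
        rw [← ENNReal.ofReal_pow (mul_nonneg hα₁.le (sq_nonneg _)),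
          ← ENNReal.ofReal_mul (sq_nonneg _)]
        congr 1
        ring
      simp_rw [e]
      rw [lintegral_const_mul _ (show Measurable fun ω => ENNReal.ofReal ((ε t ω) ^ 4) from
        ENNReal.measurable_ofReal.comp ((hεmeas t).pow_const 4)), hε4lint t, hrdef,
        ENNReal.ofReal_mul (sq_nonneg _)]
    have h := key (fun x : ℝ => (ENNReal.ofReal (α₁ * x ^ 2)) ^ 2)
      (fun x : ℝ => (ENNReal.ofReal (α₀ + l₁ * x)) ^ 2) r hA hB hval i
    have e2 : ∀ ω, (f i ω) ^ 2
        = (∏ j ∈ Finset.range i, (ENNReal.ofReal (α₁ * (ε ((0:ℤ) - 1 - (j:ℕ)) ω) ^ 2)) ^ 2)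
          * (ENNReal.ofReal (α₀ + l₁ * L ((0:ℤ) - 1 - (i:ℕ)) ω)) ^ 2 := by
      intro ω
      rw [hf_eq i ω, mul_pow, Finset.prod_pow]
    have e3 : ∀ ω, (ENNReal.ofReal (α₀ + l₁ * L ((0:ℤ) - 1 - (i:ℕ)) ω)) ^ 2
        = ENNReal.ofReal ((α₀ + l₁ * L ((0:ℤ) - 1 - (i:ℕ)) ω) ^ 2) := fun ω =>
      (ENNReal.ofReal_pow (add_nonneg hα₀ (mul_nonneg hl₁.le (hLpos _ ω).le)) 2).symm
    calc ∫⁻ ω, (f i ω) ^ 2 ∂P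
        = ∫⁻ ω, (∏ j ∈ Finset.range i,
              (ENNReal.ofReal (α₁ * (ε ((0:ℤ) - 1 - (j:ℕ)) ω) ^ 2)) ^ 2)
            * (ENNReal.ofReal (α₀ + l₁ * L ((0:ℤ) - 1 - (i:ℕ)) ω)) ^ 2 ∂P :=
          lintegral_congr fun ω => e2 ω
      _ = r ^ i * ∫⁻ ω, (ENNReal.ofReal (α₀ + l₁ * L ((0:ℤ) - 1 - (i:ℕ)) ω)) ^ 2 ∂P := h
      _ = r ^ i * ENNReal.ofReal C₀ := by
          rw [lintegral_congr fun ω => e3 ω, hBlintsq]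
  -- E[S] < ∞, hence the series converges a.e.
  have hfin1 : ∫⁻ ω, S ω ∂P < ⊤ := by
    have h1 : ∫⁻ ω, S ω ∂P = ∑' i, ∫⁻ ω, f i ω ∂P := by
      rw [hSdef]
      exact lintegral_tsum fun i => (hfmeas i).aemeasurable
    rw [h1]
    simp_rw [hf1]
    rw [ENNReal.tsum_mul_right, ENNReal.tsum_geometric]
    have hlt1 : ENNReal.ofReal α₁ < 1 := ENNReal.ofReal_lt_one.2 hα₁'
    have h2 : (1 - ENNReal.ofReal α₁)⁻¹ < ⊤ :=
      ENNReal.inv_lt_top.2 (tsub_pos_iff_lt.2 hlt1)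
    exact ENNReal.mul_lt_top h2 ENNReal.ofReal_lt_top
  have hae : ∀ᵐ ω ∂P, S ω ≠ ⊤ := (ae_lt_top hSmeas hfin1.ne).mono fun ω h => h.ne
  -- a.e. identification of σsq with S
  have hσS : ∀ᵐ ω ∂P, σsq 0 ω = (S ω).toReal := by
    filter_upwards [hae] with ω _
    rw [hσ 0 ω]
    have e : ∀ i : ℕ,
        (∏ j ∈ Finset.range i, α₁ * (ε ((0:ℤ) - 1 - (j:ℕ)) ω) ^ 2)
          * (α₀ + l₁ * L ((0:ℤ) - 1 - (i:ℕ)) ω) = (f i ω).toReal := fun i =>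
      (ENNReal.toReal_ofReal (hu_nonneg i ω)).symm
    rw [tsum_congr e, ← ENNReal.tsum_toReal_eq fun i => ENNReal.ofReal_ne_top]
  have hσae : ∀ᵐ ω ∂P, ENNReal.ofReal ((σsq 0 ω) ^ 2) = (S ω) ^ 2 := by
    filter_upwards [hae, hσS] with ω hω h1
    rw [h1, ENNReal.ofReal_pow ENNReal.toReal_nonneg, ENNReal.ofReal_toReal hω]
  -- integrability of σ⁴ is finiteness of ∫ S²
  have haesm : AEStronglyMeasurable (fun ω => (σsq 0 ω) ^ 2) P := by
    refine AEStronglyMeasurable.congr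
      (f := fun ω => ((S ω).toReal) ^ 2) ?_ ?_
    · exact (hSmeas.ennreal_toReal.pow_const 2).aestronglyMeasurable
    · filter_upwards [hσS] with ω h
      rw [h]
  have hiff1 : Integrable (fun ω => (σsq 0 ω) ^ 2) P ↔ ∫⁻ ω, (S ω) ^ 2 ∂P < ⊤ := by
    have hlint_eq : ∫⁻ ω, ENNReal.ofReal ((σsq 0 ω) ^ 2) ∂P = ∫⁻ ω, (S ω) ^ 2 ∂P :=
      lintegral_congr_ae hσae
    constructor
    · intro h
      have h2 := (hasFiniteIntegral_iff_ofReal (ae_of_all _ fun ω => sq_nonneg _)).1 h.2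
      rwa [hlint_eq] at h2
    · intro h
      refine ⟨haesm, (hasFiniteIntegral_iff_ofReal (ae_of_all _ fun ω => sq_nonneg _)).2 ?_⟩
      rwa [← hlint_eq] at h
  -- translating the RHS condition
  have hs : 0 < Real.sqrt m₄ := Real.sqrt_pos.2 hm₄pos
  have he : α₁ ^ 2 * m₄ = (α₁ * Real.sqrt m₄) ^ 2 := by
    rw [mul_pow, Real.sq_sqrt hm₄pos.le]
  have hRHS : (α₁ < 1 / Real.sqrt m₄) ↔ α₁ ^ 2 * m₄ < 1 := by
    rw [lt_div_iff₀ hs, he, sq_lt_one_iff_abs_lt_one, abs_of_pos (mul_pos hα₁ hs)]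
  -- monotone partial sums
  have hpmono : ∀ ω, Monotone fun n => ∑ i ∈ Finset.range n, f i ω := fun ω a b h =>
    Finset.sum_le_sum_of_subset (Finset.range_subset_range.2 h)
  have hpmeas : ∀ n, Measurable fun ω => (∑ i ∈ Finset.range n, f i ω) ^ 2 := fun n =>
    (Finset.measurable_sum _ fun i _ => hfmeas i).pow_const 2
  have hSsq_sup : ∀ ω, S ω ^ 2 = ⨆ n, (∑ i ∈ Finset.range n, f i ω) ^ 2 := by
    intro ω
    have h1 : S ω = ⨆ n, ∑ i ∈ Finset.range n, f i ω := ENNReal.tsum_eq_iSup_nat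
    rw [h1]
    refine le_antisymm ?_ ?_
    · rw [sq, ENNReal.iSup_mul]
      refine iSup_le fun n => ?_
      rw [ENNReal.mul_iSup]
      refine iSup_le fun m => ?_
      refine le_iSup_of_le (max n m) ?_
      rw [sq]
      exact mul_le_mul' (hpmono ω (le_max_left n m)) (hpmono ω (le_max_right n m))
    · refine iSup_le fun n => ?_
      rw [sq, sq]
      exact mul_le_mul' (le_iSup (fun n => ∑ i ∈ Finset.range n, f i ω) n)
        (le_iSup (fun n => ∑ i ∈ Finset.range n, f i ω) n)
  have hSsq_lint : ∫⁻ ω, S ω ^ 2 ∂P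
      = ⨆ n, ∫⁻ ω, (∑ i ∈ Finset.range n, f i ω) ^ 2 ∂P := by
    rw [lintegral_congr fun ω => hSsq_sup ω]
    exact lintegral_iSup hpmeas fun a b h ω => by
      rw [sq, sq]
      exact mul_le_mul' (hpmono ω h) (hpmono ω h)
  -- rpow arithmetic helpers
  have hpow2 : ∀ x : ℝ≥0∞, x ^ (2:ℝ) = x ^ 2 := fun x => by
    rw [show (2:ℝ) = ((2:ℕ):ℝ) by norm_num, ENNReal.rpow_natCast]
  have hhalf : ∀ x : ℝ≥0∞, (x ^ 2) ^ (1/(2:ℝ)) = x := fun x => by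
    rw [← hpow2 x, ← ENNReal.rpow_mul]
    norm_num
  have hhalf2 : ∀ x : ℝ≥0∞, (x ^ (1/(2:ℝ))) ^ 2 = x := fun x => by
    rw [← hpow2, ← ENNReal.rpow_mul]
    norm_num
  rw [hiff1, hRHS]
  constructor
  · -- from integrability to the moment condition
    intro hfint
    by_contra hge
    push_neg at hge
    have hr1 : (1:ℝ≥0∞) ≤ r := ENNReal.one_le_ofReal.2 hge
    have hC' : (0:ℝ≥0∞) < ENNReal.ofReal C₀ := ENNReal.ofReal_pos.2 hC₀pos
    have hlow : ∀ n : ℕ, (n : ℝ≥0∞) * ENNReal.ofReal C₀ ≤ ∫⁻ ω, S ω ^ 2 ∂P := by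
      intro n
      have h1 : ∑ i ∈ Finset.range n, ∫⁻ ω, (f i ω) ^ 2 ∂P ≤ ∫⁻ ω, S ω ^ 2 ∂P := by
        rw [← lintegral_finset_sum _ fun i _ => (hfmeas i).pow_const 2]
        refine lintegral_mono fun ω => ?_
        calc ∑ i ∈ Finset.range n, (f i ω) ^ 2
            ≤ (∑ i ∈ Finset.range n, f i ω) ^ 2 := by
              rw [sq]
              rw [Finset.sum_mul]
              refine Finset.sum_le_sum fun i hi => ?_
              rw [sq]
              exact mul_le_mul_right
                (Finset.single_le_sum (f := fun j => f j ω) (fun j _ => zero_le) hi) _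
          _ ≤ (S ω) ^ 2 := by
              rw [sq, sq]
              exact mul_le_mul' (ENNReal.sum_le_tsum _) (ENNReal.sum_le_tsum _)
      refine le_trans ?_ h1
      simp_rw [hf2]
      calc (n : ℝ≥0∞) * ENNReal.ofReal C₀
          = ∑ _i ∈ Finset.range n, ENNReal.ofReal C₀ := by
            rw [Finset.sum_const, Finset.card_range, nsmul_eq_mul]
        _ ≤ ∑ i ∈ Finset.range n, r ^ i * ENNReal.ofReal C₀ :=
            Finset.sum_le_sum fun i _ => by
              conv_lhs => rw [← one_mul (ENNReal.ofReal C₀)]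
              exact mul_le_mul_left (one_le_pow₀ hr1) _
    have htop : ∫⁻ ω, S ω ^ 2 ∂P = ⊤ := by
      refine top_le_iff.1 ?_
      have : (⊤:ℝ≥0∞) = (⨆ n : ℕ, (n : ℝ≥0∞)) * ENNReal.ofReal C₀ := by
        rw [ENNReal.iSup_natCast, ENNReal.top_mul hC'.ne']
      rw [this, ENNReal.iSup_mul]
      exact iSup_le fun n => hlow n
    rw [htop] at hfint
    exact absurd hfint (lt_irrefl _)
  · -- from the moment condition to integrability
    intro hlt
    set q : ℝ≥0∞ := ENNReal.ofReal (α₁ * Real.sqrt m₄) with hqdef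
    have hq2 : q ^ 2 = r := by
      rw [hqdef, hrdef, ← ENNReal.ofReal_pow (mul_nonneg hα₁.le hs.le), ← he]
    have hqlt : q < 1 := by
      refine ENNReal.ofReal_lt_one.2 ?_
      have := he ▸ hlt
      rw [sq_lt_one_iff_abs_lt_one, abs_of_pos (mul_pos hα₁ hs)] at this
      exact this
    set D : ℝ≥0∞ := (1 - q)⁻¹ * (ENNReal.ofReal C₀) ^ (1/(2:ℝ)) with hDdef
    have hDne : D ≠ ⊤ := by
      refine ENNReal.mul_ne_top ?_ ?_
      · exact (ENNReal.inv_lt_top.2 (tsub_pos_iff_lt.2 hqlt)).ne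
      · exact ENNReal.rpow_ne_top_of_nonneg (by norm_num) ENNReal.ofReal_ne_top
    have hbound : ∀ n, ∫⁻ ω, (∑ i ∈ Finset.range n, f i ω) ^ 2 ∂P ≤ D ^ 2 := by
      intro n
      have hm := aux_minkowski (P := P) hfmeas (Finset.range n)
      simp_rw [hpow2] at hm
      have hterm : ∀ i, (∫⁻ ω, (f i ω) ^ 2 ∂P) ^ (1/(2:ℝ))
          = q ^ i * (ENNReal.ofReal C₀) ^ (1/(2:ℝ)) := by
        intro i
        rw [hf2 i, ← hq2, ← pow_mul, mul_comm 2 i, pow_mul,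
          ENNReal.mul_rpow_of_nonneg _ _ (by norm_num : (0:ℝ) ≤ 1/2), hhalf]
      have hsum : ∑ i ∈ Finset.range n, (∫⁻ ω, (f i ω) ^ 2 ∂P) ^ (1/(2:ℝ)) ≤ D := by
        rw [hDdef]
        calc ∑ i ∈ Finset.range n, (∫⁻ ω, (f i ω) ^ 2 ∂P) ^ (1/(2:ℝ))
            = (∑ i ∈ Finset.range n, q ^ i) * (ENNReal.ofReal C₀) ^ (1/(2:ℝ)) := by
              simp_rw [hterm]
              rw [Finset.sum_mul]
          _ ≤ (1 - q)⁻¹ * (ENNReal.ofReal C₀) ^ (1/(2:ℝ)) := by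
              refine mul_le_mul_left ?_ _
              refine le_trans (ENNReal.sum_le_tsum _) ?_
              rw [ENNReal.tsum_geometric]
        
      have h12 := le_trans hm hsum
      calc ∫⁻ ω, (∑ i ∈ Finset.range n, f i ω) ^ 2 ∂P
          = ((∫⁻ ω, (∑ i ∈ Finset.range n, f i ω) ^ 2 ∂P) ^ (1/(2:ℝ))) ^ 2 :=
            (hhalf2 _).symm
        _ ≤ D ^ 2 := by
            rw [sq, sq]
            exact mul_le_mul' h12 h12
    rw [hSsq_lint]
    refine lt_of_le_of_lt (iSup_le fun n => hbound n) ?_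
    exact lt_of_le_of_lt le_rfl (lt_top_iff_ne_top.2 (by
      rw [sq]
      exact ENNReal.mul_ne_top hDne hDne))
end

section
/- For the stationary generalized ARCH solution, E[σ_t² L_s] = α_0/(1 − α_1) + l_1 ∑_{i=0}^∞ α_1^i f(t − s − i − 1), where f(h) = E[L_0 L_h]. -/
open MeasureTheory Filter ProbabilityTheory

/-- `E[σ_t² L_s] = α₀/(1−α₁) + l₁ ∑ α₁^i f(t−s−i−1)` with `f(h) = E[L₀ L_h]`. -/
theorem stmt_12 {Ω : Type*} [MeasurableSpace Ω] (P : Measure Ω) [IsProbabilityMeasure P]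
    (ε L : ℤ → Ω → ℝ) (α₀ α₁ l₁ : ℝ)
    (hα₀ : 0 ≤ α₀) (hα₁ : 0 < α₁) (hl₁ : 0 < l₁) (hα₁' : α₁ < 1)
    (hεmeas : ∀ t, Measurable (ε t))
    (hLmeas : ∀ t, Measurable (L t))
    -- (ε_t) is i.i.d. with mean 0 and unit second moment
    (hεindep : iIndepFun ε P)
    (hεident : ∀ t : ℤ, Measure.map (ε t) P = Measure.map (ε 0) P)
    (hεmean : ∫ ω, ε 0 ω ∂P = 0)
    (hεm2 : ∫ ω, (ε 0 ω) ^ 2 ∂P = 1)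
    -- (L_t) is strictly stationary, positive, mean one, square integrable
    (hLpos : ∀ t, ∀ ω, 0 < L t ω)
    (hLstat : ∀ k : ℤ, Measure.map (fun ω => fun t => L (t + k) ω) P
      = Measure.map (fun ω => fun t => L t ω) P)
    (hLmean : ∫ ω, L 0 ω ∂P = 1)
    (hL2 : MemLp (L 0) 2 P)
    -- (L_t) is independent of (ε_t)
    (hindep : IndepFun (fun ω => fun t : ℤ => ε t ω) (fun ω => fun t : ℤ => L t ω) P)
    -- σsq is the stationary series solution
    (σsq : ℤ → Ω → ℝ)
    (hσ : ∀ t : ℤ, ∀ ω, σsq t ω =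
      ∑' i : ℕ, (∏ j ∈ Finset.range i, α₁ * (ε (t - 1 - j) ω) ^ 2)
        * (α₀ + l₁ * L (t - 1 - i) ω))
    :
    ∀ t s : ℤ, ∫ ω, σsq t ω * L s ω ∂P =
      α₀ / (1 - α₁)
        + l₁ * ∑' i : ℕ, α₁ ^ i * (∫ ω, L 0 ω * L (t - s - i - 1) ω ∂P) := by
  intro t s
  have hprocL : Measurable (fun ω => fun u : ℤ => L u ω) :=
    measurable_pi_lambda _ hLmeas
  have hprocLk : ∀ k : ℤ, Measurable (fun ω => fun u : ℤ => L (u + k) ω) :=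
    fun k => measurable_pi_lambda _ (fun u => hLmeas (u + k))
  -- shift invariance for integrals of functionals of the L-process
  have hshift : ∀ (F : (ℤ → ℝ) → ℝ), Measurable F → ∀ k : ℤ,
      ∫ ω, F (fun u => L (u + k) ω) ∂P = ∫ ω, F (fun u => L u ω) ∂P := by
    intro F hF k
    rw [← integral_map (hprocLk k).aemeasurable hF.aestronglyMeasurable,
      hLstat k, integral_map hprocL.aemeasurable hF.aestronglyMeasurable]
  have hLL : ∀ a b : ℤ, ∫ ω, L a ω * L b ω ∂P = ∫ ω, L 0 ω * L (b - a) ω ∂P := by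
    intro a b
    have hF : Measurable (fun g : ℤ → ℝ => g 0 * g (b - a)) :=
      (measurable_pi_apply 0).mul (measurable_pi_apply _)
    have h := hshift (fun g : ℤ → ℝ => g 0 * g (b - a)) hF a
    simpa [show (0 : ℤ) + a = a from zero_add a,
      show b - a + a = b from by ring] using h
  have hLsq : ∀ a : ℤ, ∫ ω, (L a ω) ^ 2 ∂P = ∫ ω, (L 0 ω) ^ 2 ∂P := by
    intro a
    have hF : Measurable (fun g : ℤ → ℝ => g 0 ^ 2) := (measurable_pi_apply 0).pow_const 2
    have h := hshift (fun g : ℤ → ℝ => g 0 ^ 2) hF a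
    simpa [show (0 : ℤ) + a = a from zero_add a] using h
  have hLm : ∀ a : ℤ, ∫ ω, L a ω ∂P = 1 := by
    intro a
    have hF : Measurable (fun g : ℤ → ℝ => g 0) := measurable_pi_apply 0
    have h := hshift (fun g : ℤ → ℝ => g 0) hF a
    simpa [show (0 : ℤ) + a = a from zero_add a] using h.trans hLmean
  -- square integrability of each L a
  have hL2a : ∀ a : ℤ, MemLp (L a) 2 P := by
    intro a
    have he : Measurable (fun g : ℤ → ℝ => g 0) := measurable_pi_apply 0
    have h0 : MemLp (fun g : ℤ → ℝ => g 0) 2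
        (Measure.map (fun ω => fun u : ℤ => L u ω) P) :=
      (memLp_map_measure_iff he.aestronglyMeasurable hprocL.aemeasurable).2 hL2
    rw [← hLstat a] at h0
    have h1 := (memLp_map_measure_iff he.aestronglyMeasurable (hprocLk a).aemeasurable).1 h0
    simpa [Function.comp_def, show (0 : ℤ) + a = a from zero_add a] using h1
  have hInt2 : ∀ a : ℤ, Integrable (fun ω => (L a ω) ^ 2) P := fun a => (hL2a a).integrable_sq
  have hIntL : ∀ a : ℤ, Integrable (L a) P := fun a => (hL2a a).integrable one_le_two
  have hIntLL : ∀ a b : ℤ, Integrable (fun ω => L a ω * L b ω) P := by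
    intro a b
    refine Integrable.mono' ((hInt2 a).add (hInt2 b))
      ((hLmeas a).mul (hLmeas b)).aestronglyMeasurable
      (Filter.Eventually.of_forall fun ω => ?_)
    have ha := (hLpos a ω).le; have hb := (hLpos b ω).le
    rw [Real.norm_eq_abs, abs_of_nonneg (mul_nonneg ha hb)]
    simp only [Pi.add_apply]
    nlinarith [sq_nonneg (L a ω - L b ω), mul_nonneg ha hb]
  have hfnn : ∀ a b : ℤ, 0 ≤ ∫ ω, L a ω * L b ω ∂P :=
    fun a b => integral_nonneg fun ω => mul_nonneg (hLpos a ω).le (hLpos b ω).le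
  have hfb : ∀ a b : ℤ, ∫ ω, L a ω * L b ω ∂P ≤ 2 * ∫ ω, (L 0 ω) ^ 2 ∂P := by
    intro a b
    calc ∫ ω, L a ω * L b ω ∂P ≤ ∫ ω, ((L a ω) ^ 2 + (L b ω) ^ 2) ∂P := by
          refine integral_mono (hIntLL a b) ((hInt2 a).add (hInt2 b)) fun ω => ?_
          nlinarith [sq_nonneg (L a ω - L b ω), mul_nonneg (hLpos a ω).le (hLpos b ω).le]
      _ = 2 * ∫ ω, (L 0 ω) ^ 2 ∂P := by
          rw [integral_add (hInt2 a) (hInt2 b), hLsq a, hLsq b]; ring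
  -- ε² moments
  have hε2int : Integrable (fun ω => (ε 0 ω) ^ 2) P := by
    by_contra h
    rw [integral_undef h] at hεm2
    exact one_ne_zero hεm2.symm
  have hmx2 : Measurable (fun x : ℝ => x ^ 2) := measurable_id.pow_const 2
  have hε2a : ∀ u : ℤ, Integrable (fun ω => (ε u ω) ^ 2) P := by
    intro u
    have h1 : Integrable (fun x : ℝ => x ^ 2) (Measure.map (ε 0) P) :=
      (integrable_map_measure hmx2.aestronglyMeasurable (hεmeas 0).aemeasurable).2 hε2int
    rw [← hεident u] at h1
    exact (integrable_map_measure hmx2.aestronglyMeasurable (hεmeas u).aemeasurable).1 h1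
  have hε2m : ∀ u : ℤ, ∫ ω, (ε u ω) ^ 2 ∂P = 1 := by
    intro u
    rw [← integral_map (hεmeas u).aemeasurable hmx2.aestronglyMeasurable, hεident u,
      integral_map (hεmeas 0).aemeasurable hmx2.aestronglyMeasurable]
    exact hεm2
  -- independence of the squares
  have hqindep : iIndepFun
      (fun u ω => (ε u ω) ^ 2) P :=
    hεindep.comp (fun _ => fun x : ℝ => x ^ 2) (fun _ => hmx2)
  -- integral of products of squares
  have hX : ∀ i : ℕ, Integrable (fun ω => ∏ j ∈ Finset.range i, (ε (t - 1 - j) ω) ^ 2) P ∧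
      ∫ ω, ∏ j ∈ Finset.range i, (ε (t - 1 - j) ω) ^ 2 ∂P = 1 := by
    intro i
    induction i with
    | zero => simp
    | succ n ih =>
      have hinj : ∀ x ∈ Finset.range n, ∀ y ∈ Finset.range n,
          (fun j : ℕ => t - 1 - (j : ℤ)) x = (fun j : ℕ => t - 1 - (j : ℤ)) y → x = y := by
        intro x _ y _ h
        simp only at h
        omega
      have hre : (fun ω => ∏ j ∈ Finset.range n, (ε (t - 1 - j) ω) ^ 2)
          = ∏ m ∈ (Finset.range n).image (fun j : ℕ => t - 1 - (j : ℤ)),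
              (fun u ω => (ε u ω) ^ 2) m := by
        funext ω
        simp only [Finset.prod_apply]
        rw [Finset.prod_image hinj]
      have hnotmem : t - 1 - (n : ℤ) ∉ (Finset.range n).image (fun j : ℕ => t - 1 - (j : ℤ)) := by
        simp only [Finset.mem_image, Finset.mem_range, not_exists, not_and]
        intro x hx
        omega
      have hind : IndepFun (fun ω => ∏ j ∈ Finset.range n, (ε (t - 1 - j) ω) ^ 2)
          (fun ω => (ε (t - 1 - n) ω) ^ 2) P := by
        rw [hre]
        exact hqindep.indepFun_finsetProd_of_notMem
          (fun u => (hεmeas u).pow_const 2) hnotmem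
      have hstep : (fun ω => ∏ j ∈ Finset.range (n + 1), (ε (t - 1 - j) ω) ^ 2)
          = fun ω => (∏ j ∈ Finset.range n, (ε (t - 1 - j) ω) ^ 2) * (ε (t - 1 - n) ω) ^ 2 := by
        funext ω; rw [Finset.prod_range_succ]
      constructor
      · have h2 : Integrable ((fun ω => ∏ j ∈ Finset.range n, (ε (t - 1 - j) ω) ^ 2)
            * fun ω => (ε (t - 1 - n) ω) ^ 2) P := hind.integrable_mul ih.1 (hε2a _)
        rw [hstep]
        exact h2
      · have h2 : ∫ ω, (∏ j ∈ Finset.range n, (ε (t - 1 - j) ω) ^ 2) * (ε (t - 1 - n) ω) ^ 2 ∂P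
            = (∫ ω, ∏ j ∈ Finset.range n, (ε (t - 1 - j) ω) ^ 2 ∂P)
              * ∫ ω, (ε (t - 1 - n) ω) ^ 2 ∂P :=
          hind.integral_fun_mul_eq_mul_integral ih.1.aestronglyMeasurable (hε2a _).aestronglyMeasurable
        rw [hstep, h2, ih.2, hε2m, one_mul]
  -- independence of the ε-part and the L-part
  have hindXY : ∀ i : ℕ, IndepFun (fun ω => ∏ j ∈ Finset.range i, (ε (t - 1 - j) ω) ^ 2)
      (fun ω => (α₀ + l₁ * L (t - 1 - i) ω) * L s ω) P := by
    intro i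
    have hΦ : Measurable (fun g : ℤ → ℝ => ∏ j ∈ Finset.range i, (g (t - 1 - (j : ℤ))) ^ 2) :=
      Finset.measurable_prod _ (fun j _ => (measurable_pi_apply _).pow_const 2)
    have hΨ : Measurable (fun g : ℤ → ℝ => (α₀ + l₁ * g (t - 1 - (i : ℤ))) * g s) :=
      (measurable_const.add (measurable_const.mul (measurable_pi_apply _))).mul
        (measurable_pi_apply _)
    exact hindep.comp hΦ hΨ
  have hIntY : ∀ i : ℕ, Integrable (fun ω => (α₀ + l₁ * L (t - 1 - i) ω) * L s ω) P := by
    intro i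
    have h1 : (fun ω => (α₀ + l₁ * L (t - 1 - i) ω) * L s ω)
        = fun ω => α₀ * L s ω + l₁ * (L (t - 1 - i) ω * L s ω) := by funext ω; ring
    rw [h1]
    exact ((hIntL s).const_mul α₀).add ((hIntLL _ _).const_mul l₁)
  have hIntYval : ∀ i : ℕ, ∫ ω, (α₀ + l₁ * L (t - 1 - i) ω) * L s ω ∂P
      = α₀ + l₁ * ∫ ω, L 0 ω * L (t - s - i - 1) ω ∂P := by
    intro i
    have h1 : (fun ω => (α₀ + l₁ * L (t - 1 - i) ω) * L s ω)
        = fun ω => α₀ * L s ω + l₁ * (L s ω * L (t - 1 - i) ω) := by funext ω; ring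
    rw [h1, integral_add ((hIntL s).const_mul α₀) ((hIntLL s _).const_mul l₁),
      integral_const_mul, integral_const_mul, hLm s, hLL s (t - 1 - i), mul_one]
    have h2 : t - 1 - (i : ℤ) - s = t - s - i - 1 := by ring
    rw [h2]
  -- nonnegativity of the terms
  have hTnn : ∀ (i : ℕ) (ω : Ω),
      0 ≤ (∏ j ∈ Finset.range i, α₁ * (ε (t - 1 - j) ω) ^ 2)
        * (α₀ + l₁ * L (t - 1 - i) ω) * L s ω := by
    intro i ω
    have h1 : 0 ≤ ∏ j ∈ Finset.range i, α₁ * (ε (t - 1 - j) ω) ^ 2 :=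
      Finset.prod_nonneg fun j _ => mul_nonneg hα₁.le (sq_nonneg _)
    have h2 : 0 ≤ α₀ + l₁ * L (t - 1 - i) ω :=
      add_nonneg hα₀ (mul_nonneg hl₁.le (hLpos _ ω).le)
    exact mul_nonneg (mul_nonneg h1 h2) (hLpos s ω).le
  -- value of the integral of each term
  have hTval : ∀ i : ℕ, ∫ ω, (∏ j ∈ Finset.range i, α₁ * (ε (t - 1 - j) ω) ^ 2)
        * (α₀ + l₁ * L (t - 1 - i) ω) * L s ω ∂P
      = α₁ ^ i * (α₀ + l₁ * ∫ ω, L 0 ω * L (t - s - i - 1) ω ∂P) := by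
    intro i
    have h1 : (fun ω => (∏ j ∈ Finset.range i, α₁ * (ε (t - 1 - j) ω) ^ 2)
        * (α₀ + l₁ * L (t - 1 - i) ω) * L s ω)
        = fun ω => α₁ ^ i * ((∏ j ∈ Finset.range i, (ε (t - 1 - j) ω) ^ 2)
          * ((α₀ + l₁ * L (t - 1 - i) ω) * L s ω)) := by
      funext ω
      rw [Finset.prod_mul_distrib, Finset.prod_const, Finset.card_range]
      ring
    have hmul : ∫ ω, (∏ j ∈ Finset.range i, (ε (t - 1 - j) ω) ^ 2)
        * ((α₀ + l₁ * L (t - 1 - i) ω) * L s ω) ∂P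
        = (∫ ω, ∏ j ∈ Finset.range i, (ε (t - 1 - j) ω) ^ 2 ∂P)
          * ∫ ω, (α₀ + l₁ * L (t - 1 - i) ω) * L s ω ∂P :=
      (hindXY i).integral_fun_mul_eq_mul_integral (hX i).1.aestronglyMeasurable (hIntY i).aestronglyMeasurable
    rw [h1, integral_const_mul, hmul, (hX i).2, one_mul, hIntYval i]
  -- integrability of each term
  have hIntT : ∀ i : ℕ, Integrable (fun ω => (∏ j ∈ Finset.range i, α₁ * (ε (t - 1 - j) ω) ^ 2)
      * (α₀ + l₁ * L (t - 1 - i) ω) * L s ω) P := by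
    intro i
    have h1 : (fun ω => (∏ j ∈ Finset.range i, α₁ * (ε (t - 1 - j) ω) ^ 2)
        * (α₀ + l₁ * L (t - 1 - i) ω) * L s ω)
        = fun ω => α₁ ^ i * ((∏ j ∈ Finset.range i, (ε (t - 1 - j) ω) ^ 2)
          * ((α₀ + l₁ * L (t - 1 - i) ω) * L s ω)) := by
      funext ω
      rw [Finset.prod_mul_distrib, Finset.prod_const, Finset.card_range]
      ring
    rw [h1]
    have h2 : Integrable ((fun ω => ∏ j ∈ Finset.range i, (ε (t - 1 - j) ω) ^ 2)
        * fun ω => (α₀ + l₁ * L (t - 1 - i) ω) * L s ω) P :=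
      (hindXY i).integrable_mul (hX i).1 (hIntY i)
    exact h2.const_mul _
  have hS1 : Summable (fun i : ℕ => α₁ ^ i) := summable_geometric_of_lt_one hα₁.le hα₁'
  have hS2 : Summable (fun i : ℕ => α₁ ^ i * ∫ ω, L 0 ω * L (t - s - i - 1) ω ∂P) := by
    refine Summable.of_nonneg_of_le
      (fun i => mul_nonneg (pow_nonneg hα₁.le i) (hfnn _ _))
      (fun i => mul_le_mul_of_nonneg_left (hfb _ _) (pow_nonneg hα₁.le i))
      (hS1.mul_right (2 * ∫ ω, (L 0 ω) ^ 2 ∂P))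
  have hsum_norm : Summable (fun i : ℕ =>
      ∫ ω, ‖(∏ j ∈ Finset.range i, α₁ * (ε (t - 1 - j) ω) ^ 2)
        * (α₀ + l₁ * L (t - 1 - i) ω) * L s ω‖ ∂P) := by
    have heq : ∀ i : ℕ, ∫ ω, ‖(∏ j ∈ Finset.range i, α₁ * (ε (t - 1 - j) ω) ^ 2)
        * (α₀ + l₁ * L (t - 1 - i) ω) * L s ω‖ ∂P
        = α₁ ^ i * (α₀ + l₁ * ∫ ω, L 0 ω * L (t - s - i - 1) ω ∂P) := by
      intro i
      rw [← hTval i]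
      refine integral_congr_ae (Filter.Eventually.of_forall fun ω => ?_)
      exact Real.norm_of_nonneg (hTnn i ω)
    refine Summable.of_nonneg_of_le (fun i => integral_nonneg fun ω => norm_nonneg _)
      (fun i => ?_) (hS1.mul_right (α₀ + l₁ * (2 * ∫ ω, (L 0 ω) ^ 2 ∂P)))
    rw [heq i]
    refine mul_le_mul_of_nonneg_left ?_ (pow_nonneg hα₁.le i)
    nlinarith [hfb 0 (t - s - i - 1), hl₁.le]
  calc ∫ ω, σsq t ω * L s ω ∂P
      = ∫ ω, ∑' i : ℕ, (∏ j ∈ Finset.range i, α₁ * (ε (t - 1 - j) ω) ^ 2)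
          * (α₀ + l₁ * L (t - 1 - i) ω) * L s ω ∂P := by
        refine integral_congr_ae (Filter.Eventually.of_forall fun ω => ?_)
        show σsq t ω * L s ω = _
        rw [hσ t ω, ← tsum_mul_right]
    _ = ∑' i : ℕ, ∫ ω, (∏ j ∈ Finset.range i, α₁ * (ε (t - 1 - j) ω) ^ 2)
          * (α₀ + l₁ * L (t - 1 - i) ω) * L s ω ∂P :=
        (integral_tsum_of_summable_integral_norm hIntT hsum_norm).symm
    _ = ∑' i : ℕ, (α₀ * α₁ ^ i
          + l₁ * (α₁ ^ i * ∫ ω, L 0 ω * L (t - s - i - 1) ω ∂P)) := by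
        refine tsum_congr fun i => ?_
        rw [hTval i]; ring
    _ = α₀ * ∑' i : ℕ, α₁ ^ i
          + l₁ * ∑' i : ℕ, α₁ ^ i * ∫ ω, L 0 ω * L (t - s - i - 1) ω ∂P := by
        rw [Summable.tsum_add (hS1.mul_left α₀) (hS2.mul_left l₁), tsum_mul_left, tsum_mul_left]
    _ = α₀ / (1 - α₁)
          + l₁ * ∑' i : ℕ, α₁ ^ i * ∫ ω, L 0 ω * L (t - s - i - 1) ω ∂P := by
        rw [tsum_geometric_of_lt_one hα₁.le hα₁', div_eq_mul_inv]
end
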